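/- arXiv:1905.12870 — 9 statements merged into one kernel-verified Lean document; each statement's English description precedes it below -/
import Mathlib

section
/- Let f : ℝ → ℝ be convex on the interval J, let A₁,…,Aₙ be self-adjoint operators with spectra in J, let Φ₁,…,Φₙ : B(H) → B(K) be positive linear maps with ∑ᵢ Φᵢ(1_H) = 1_K, and for each i let C_{Aᵢ} = f'(Aᵢ) where f is differentiable convex. Then for every t ∈ J: ∑ᵢ Φᵢ(f(Aᵢ)) ≤ f(t)·1_K + ∑ᵢ Φᵢ(f'(Aᵢ)·Aᵢ) − t·∑ᵢ Φᵢ(f'(Aᵢ)) as operators. -/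
open scoped InnerProductSpace

/-- Supporting line inequality for a convex differentiable function. -/
lemma supporting_line_ineq {f f' : ℝ → ℝ} {J : Set ℝ} (hf : ConvexOn ℝ J f)
    (hf' : ∀ t ∈ J, HasDerivAt f (f' t) t) {s t : ℝ} (hs : s ∈ J) (ht : t ∈ J) :
    f s + f' s * (t - s) ≤ f t := by
  rcases lt_trichotomy s t with h | rfl | h
  · have hle := hf.le_slope_of_hasDerivAt hs ht h (hf' s hs)
    rw [slope_def_field] at hle
    have := (le_div_iff₀ (by linarith : (0:ℝ) < t - s)).mp hle
    linarith
  · simp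
  · have hle := hf.slope_le_of_hasDerivAt ht hs h (hf' s hs)
    rw [slope_def_field] at hle
    have := (div_le_iff₀ (by linarith : (0:ℝ) < s - t)).mp hle
    nlinarith

set_option synthInstance.maxHeartbeats 1000000 in
set_option maxHeartbeats 1000000 in
/-- Operator form of the supporting-line inequality applied at each `Aᵢ`. -/
theorem operator_supporting_line_sum {H K : Type*}
    [NormedAddCommGroup H] [InnerProductSpace ℂ H] [CompleteSpace H]
    [NormedAddCommGroup K] [InnerProductSpace ℂ K] [CompleteSpace K]
    (f f' : ℝ → ℝ) (J : Set ℝ) (hf : ConvexOn ℝ J f)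
    (hf' : ∀ t ∈ J, HasDerivAt f (f' t) t) (hf'c : ContinuousOn f' J)
    (n : ℕ) (A : Fin n → H →L[ℂ] H)
    (Φ : Fin n → (H →L[ℂ] H) →ₗ[ℂ] (K →L[ℂ] K))
    (hA : ∀ i, IsSelfAdjoint (A i)) (hspec : ∀ i, spectrum ℝ (A i) ⊆ J)
    (hΦpos : ∀ i, ∀ T : H →L[ℂ] H, T.IsPositive → (Φ i T).IsPositive)
    (hunital : ∑ i, Φ i 1 = 1) :
    ∀ t ∈ J,
      ∑ i, Φ i (cfc f (A i)) ≤
        f t • (1 : K →L[ℂ] K) + ∑ i, Φ i (cfc f' (A i) * A i)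
          - t • ∑ i, Φ i (cfc f' (A i)) := by
  intro t ht
  have hfc : ContinuousOn f J := fun x hx => ((hf' x hx).continuousAt).continuousWithinAt
  -- the operator inequality at each i
  have key : ∀ i, cfc f (A i) ≤
      f t • (1 : H →L[ℂ] H) + (cfc f' (A i) * A i - t • cfc f' (A i)) := by
    intro i
    have hAi := hA i
    have hsp := hspec i
    have hcf : ContinuousOn f (spectrum ℝ (A i)) := hfc.mono hsp
    have hcf' : ContinuousOn f' (spectrum ℝ (A i)) := hf'c.mono hsp
    have hcg : ContinuousOn (fun s => f t + (f' s * s - t * f' s)) (spectrum ℝ (A i)) :=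
      continuousOn_const.add ((hcf'.mul continuousOn_id).sub (continuousOn_const.mul hcf'))
    have h1 : cfc f (A i) ≤ cfc (fun s => f t + (f' s * s - t * f' s)) (A i) := by
      refine cfc_mono (fun x hx => ?_) hcf hcg
      have := supporting_line_ineq hf hf' (hsp hx) ht
      nlinarith
    refine h1.trans_eq ?_
    have e1 := cfc_const_add (f t) (fun s => f' s * s - t * f' s) (A i)
      ((hcf'.mul continuousOn_id).sub (continuousOn_const.mul hcf')) hAi
    have e2 := cfc_sub (fun s => f' s * s) (fun s => t * f' s) (A i)
      (hcf'.mul continuousOn_id) (continuousOn_const.mul hcf')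
    have e3 := cfc_mul f' (fun x => x) (A i) hcf' continuousOn_id
    rw [cfc_id' (R := ℝ) (A i) hAi] at e3
    have e4 := cfc_const_mul t f' (A i) hcf'
    rw [e1, e2, e3, e4, Algebra.algebraMap_eq_smul_one]
  -- Φ i is monotone
  have hmono : ∀ i, ∀ x y : H →L[ℂ] H, x ≤ y → Φ i x ≤ Φ i y := by
    intro i x y hxy
    rw [ContinuousLinearMap.le_def] at hxy ⊢
    have := hΦpos i (y - x) hxy
    rwa [map_sub] at this
  calc ∑ i, Φ i (cfc f (A i))
      ≤ ∑ i, Φ i (f t • (1 : H →L[ℂ] H) + (cfc f' (A i) * A i - t • cfc f' (A i))) :=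
        Finset.sum_le_sum fun i _ => hmono i _ _ (key i)
    _ = f t • (1 : K →L[ℂ] K) + ∑ i, Φ i (cfc f' (A i) * A i)
          - t • ∑ i, Φ i (cfc f' (A i)) := by
        have hsmul : ∀ (r : ℝ) (x : H →L[ℂ] H) (i : Fin n), Φ i (r • x) = r • Φ i x := by
          intro r x i
          rw [← algebraMap_smul ℂ r x, map_smul, algebraMap_smul ℂ r (Φ i x)]
        simp only [map_add, map_sub, hsmul]
        rw [Finset.sum_add_distrib, Finset.sum_sub_distrib, ← Finset.smul_sum,
          ← Finset.smul_sum, hunital]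
        abel
end

section
/- Let f : ℝ → ℝ be a convex differentiable function on an interval J, let A₁,…,Aₙ be self-adjoint operators with spectra in J, and Φ₁,…,Φₙ : B(H) → B(K) positive linear maps with ∑ᵢ Φᵢ(1_H) = 1_K. Write S = ∑ᵢ Φᵢ(Aᵢ) and define ζ = sup over unit vectors x ∈ K of (⟨f'(S)·S x, x⟩ − ⟨S x, x⟩·⟨f'(S) x, x⟩). Then f(S) ≤ ∑ᵢ Φᵢ(f(Aᵢ)) + ζ·1_K. -/
open scoped InnerProductSpace
section Aux
variable {K : Type*} [NormedAddCommGroup K] [InnerProductSpace ℂ K] [CompleteSpace K]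

lemma ojTangent {f f' : ℝ → ℝ} {J : Set ℝ} (hf : ConvexOn ℝ J f)
    (hf' : ∀ t ∈ J, HasDerivAt f (f' t) t) :
    ∀ s ∈ J, ∀ t ∈ J, f t + f' t * (s - t) ≤ f s := by
  intro s hs t ht
  rcases lt_trichotomy s t with h | h | h
  · have h1 := hf.slope_le_of_hasDerivAt hs ht h (hf' t ht)
    rw [slope_def_field, div_le_iff₀ (by linarith)] at h1
    nlinarith
  · simp [h]
  · have h1 := hf.le_slope_of_hasDerivAt ht hs h (hf' t ht)
    rw [slope_def_field, le_div_iff₀ (by linarith)] at h1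
    nlinarith

lemma ojInnerLe {T T' : K →L[ℂ] K} (h : T ≤ T') (x : K) :
    RCLike.re ⟪T x, x⟫_ℂ ≤ RCLike.re ⟪T' x, x⟫_ℂ := by
  have h1 := ((ContinuousLinearMap.le_def T T').mp h).re_inner_nonneg_left x
  simp only [ContinuousLinearMap.reApplyInnerSelf, ContinuousLinearMap.sub_apply,
    inner_sub_left, map_sub] at h1
  linarith

lemma ojSmulEval (r : ℝ) (T : K →L[ℂ] K) (x : K) :
    RCLike.re ⟪(r • T) x, x⟫_ℂ = r * RCLike.re ⟪T x, x⟫_ℂ := by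
  rw [ContinuousLinearMap.smul_apply, ← Complex.coe_smul, inner_smul_left]
  simp [Complex.conj_ofReal]

lemma ojAlgEval (r : ℝ) (x : K) :
    RCLike.re ⟪(algebraMap ℝ (K →L[ℂ] K) r) x, x⟫_ℂ = r * ‖x‖ ^ 2 := by
  rw [Algebra.algebraMap_eq_smul_one, ojSmulEval]
  simp only [ContinuousLinearMap.one_apply]
  rw [← @inner_self_eq_norm_sq ℂ]

lemma ojAddEval (T T' : K →L[ℂ] K) (x : K) :
    RCLike.re ⟪(T + T') x, x⟫_ℂ = RCLike.re ⟪T x, x⟫_ℂ + RCLike.re ⟪T' x, x⟫_ℂ := by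
  simp [ContinuousLinearMap.add_apply, inner_add_left]

lemma ojSubEval (T T' : K →L[ℂ] K) (x : K) :
    RCLike.re ⟪(T - T') x, x⟫_ℂ = RCLike.re ⟪T x, x⟫_ℂ - RCLike.re ⟪T' x, x⟫_ℂ := by
  simp [ContinuousLinearMap.sub_apply, inner_sub_left]

lemma ojQsmul (T : K →L[ℂ] K) (c : ℝ) (u : K) :
    RCLike.re ⟪T (c • u), c • u⟫_ℂ = c ^ 2 * RCLike.re ⟪T u, u⟫_ℂ := by
  rw [← Complex.coe_smul, map_smul, inner_smul_left, inner_smul_right]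
  simp [Complex.conj_ofReal]
  ring

lemma ojReLeNorm (T : K →L[ℂ] K) (x : K) (hx : ‖x‖ = 1) :
    RCLike.re ⟪T x, x⟫_ℂ ≤ ‖T‖ ∧ -‖T‖ ≤ RCLike.re ⟪T x, x⟫_ℂ := by
  have h1 : ‖⟪T x, x⟫_ℂ‖ ≤ ‖T‖ := by
    calc ‖⟪T x, x⟫_ℂ‖ ≤ ‖T x‖ * ‖x‖ := norm_inner_le_norm _ _
    _ ≤ ‖T‖ * ‖x‖ * ‖x‖ := by gcongr; exact T.le_opNorm x
    _ = ‖T‖ := by rw [hx]; ring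
  have h2 : |RCLike.re ⟪T x, x⟫_ℂ| ≤ ‖⟪T x, x⟫_ℂ‖ := RCLike.abs_re_le_norm _
  constructor <;> cases abs_le.mp (h2.trans h1) <;> linarith

lemma ojSaSmul (r : ℝ) (P : K →L[ℂ] K) (hP : IsSelfAdjoint P) : IsSelfAdjoint (r • P) := by
  rw [IsSelfAdjoint, ← Complex.coe_smul, star_smul, hP.star_eq]
  simp

end Aux

set_option maxHeartbeats 1000000 in
set_option synthInstance.maxHeartbeats 200000 in
/-- Operator Jensen-type inequality without operator convexity. -/
theorem operator_jensen_without_operator_convexity {H K : Type*}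
    [NormedAddCommGroup H] [InnerProductSpace ℂ H] [CompleteSpace H]
    [NormedAddCommGroup K] [InnerProductSpace ℂ K] [CompleteSpace K]
    (f f' : ℝ → ℝ) (J : Set ℝ) (hf : ConvexOn ℝ J f)
    (hf' : ∀ t ∈ J, HasDerivAt f (f' t) t) (hf'c : ContinuousOn f' J)
    (n : ℕ) (A : Fin n → H →L[ℂ] H)
    (Φ : Fin n → (H →L[ℂ] H) →ₗ[ℂ] (K →L[ℂ] K))
    (hA : ∀ i, IsSelfAdjoint (A i)) (hspec : ∀ i, spectrum ℝ (A i) ⊆ J)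
    (hΦpos : ∀ i, ∀ T : H →L[ℂ] H, T.IsPositive → (Φ i T).IsPositive)
    (hunital : ∑ i, Φ i 1 = 1)
    (S : K →L[ℂ] K) (hS : S = ∑ i, Φ i (A i))
    (ζ : ℝ)
    (hζ : ζ = ⨆ x : {x : K // ‖x‖ = 1},
      (RCLike.re ⟪(cfc f' S * S) (x : K), (x : K)⟫_ℂ
        - RCLike.re ⟪S (x : K), (x : K)⟫_ℂ
          * RCLike.re ⟪cfc f' S (x : K), (x : K)⟫_ℂ)) :
    cfc f S ≤ ∑ i, Φ i (cfc f (A i)) + ζ • (1 : K →L[ℂ] K) := by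
  rcases subsingleton_or_nontrivial K with hK | hK
  · haveI : Subsingleton (K →L[ℂ] K) := by
      constructor; intro a b; ext x; exact Subsingleton.elim _ _
    exact le_of_eq (Subsingleton.elim _ _)
  -- K is nontrivial
  have hHnt : Nontrivial H := by
    by_contra h
    rw [not_nontrivial_iff_subsingleton] at h
    have h1 : (1 : H →L[ℂ] H) = 0 := by ext x; exact Subsingleton.elim _ _
    rw [h1] at hunital
    simp only [map_zero, Finset.sum_const, smul_zero] at hunital
    exact one_ne_zero (α := K →L[ℂ] K) hunital.symm
  have hn : Nonempty (Fin n) := by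
    rcases Nat.eq_zero_or_pos n with h | h
    · subst h
      simp only [Finset.univ_eq_empty, Finset.sum_empty] at hunital
      exact absurd hunital zero_ne_one
    · exact ⟨⟨0, h⟩⟩
  -- spectra are nonempty compact
  have hspec_ne : ∀ i, (spectrum ℝ (A i)).Nonempty := fun i => (hA i).spectrum_nonempty
  have hspec_cpt : ∀ i, IsCompact (spectrum ℝ (A i)) := fun i => spectrum.isCompact _
  set m' : Fin n → ℝ := fun i => sInf (spectrum ℝ (A i)) with hm'
  set M' : Fin n → ℝ := fun i => sSup (spectrum ℝ (A i)) with hM'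
  have hm'mem : ∀ i, m' i ∈ spectrum ℝ (A i) := fun i => (hspec_cpt i).sInf_mem (hspec_ne i)
  have hM'mem : ∀ i, M' i ∈ spectrum ℝ (A i) := fun i => (hspec_cpt i).sSup_mem (hspec_ne i)
  set m : ℝ := Finset.univ.inf' Finset.univ_nonempty m' with hm
  set M : ℝ := Finset.univ.sup' Finset.univ_nonempty M' with hM
  have hmJ : m ∈ J := by
    obtain ⟨i, -, hi⟩ := Finset.exists_mem_eq_inf' Finset.univ_nonempty m'
    rw [hm, hi]; exact hspec i (hm'mem i)
  have hMJ : M ∈ J := by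
    obtain ⟨i, -, hi⟩ := Finset.exists_mem_eq_sup' Finset.univ_nonempty M'
    rw [hM, hi]; exact hspec i (hM'mem i)
  have hIccJ : Set.Icc m M ⊆ J := (hf.1.ordConnected).out hmJ hMJ
  -- positivity of Phi gives monotonicity
  have hPhimono : ∀ i, ∀ {a b : H →L[ℂ] H}, a ≤ b → Φ i a ≤ Φ i b := by
    intro i a b hab
    rw [ContinuousLinearMap.le_def] at hab ⊢
    have := hΦpos i _ hab
    rwa [map_sub] at this
  have hPhialg : ∀ i (r : ℝ), Φ i (algebraMap ℝ _ r) = r • Φ i 1 := by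
    intro i r
    rw [Algebra.algebraMap_eq_smul_one, ← Complex.coe_smul, map_smul, Complex.coe_smul]
  have hPhismul : ∀ i (r : ℝ) (T : H →L[ℂ] H), Φ i (r • T) = r • Φ i T := by
    intro i r T
    rw [← Complex.coe_smul, map_smul, Complex.coe_smul]
  -- operator bounds
  have hAleM : ∀ i, A i ≤ algebraMap ℝ _ M := fun i =>
    le_algebraMap_of_spectrum_le
      (fun x hx => (le_csSup (hspec_cpt i).bddAbove hx).trans
        (Finset.le_sup' M' (Finset.mem_univ i))) (hA i)
  have hmleA : ∀ i, algebraMap ℝ _ m ≤ A i := fun i =>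
    algebraMap_le_of_le_spectrum
      (fun x hx => (Finset.inf'_le m' (Finset.mem_univ i)).trans
        (csInf_le (hspec_cpt i).bddBelow hx)) (hA i)
  have hsum_alg : ∀ r : ℝ, ∑ i, Φ i (algebraMap ℝ (H →L[ℂ] H) r)
      = algebraMap ℝ (K →L[ℂ] K) r := by
    intro r
    rw [Finset.sum_congr rfl (fun i _ => hPhialg i r), ← Finset.smul_sum, hunital,
      Algebra.algebraMap_eq_smul_one]
  have hSleM : S ≤ algebraMap ℝ _ M := by
    rw [hS, ← hsum_alg M]
    exact Finset.sum_le_sum (fun i _ => hPhimono i (hAleM i))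
  have hmleS : algebraMap ℝ _ m ≤ S := by
    rw [hS, ← hsum_alg m]
    exact Finset.sum_le_sum (fun i _ => hPhimono i (hmleA i))
  have halg_sa : ∀ r : ℝ, IsSelfAdjoint (algebraMap ℝ (K →L[ℂ] K) r) := by
    intro r
    exact IsSelfAdjoint.algebraMap _ (IsSelfAdjoint.all r)
  have hSsa : IsSelfAdjoint S := by
    have h1 := ((ContinuousLinearMap.le_def _ _).mp hmleS).isSelfAdjoint
    have h2 := (h1.add (halg_sa m))
    rwa [sub_add_cancel] at h2
  have hspecSJ : spectrum ℝ S ⊆ J := by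
    intro x hx
    exact hIccJ ⟨(algebraMap_le_iff_le_spectrum hSsa).mp hmleS x hx,
      (le_algebraMap_iff_spectrum_le hSsa).mp hSleM x hx⟩
  have hfc : ContinuousOn f J := fun t ht => (hf' t ht).continuousAt.continuousWithinAt
  have hfS : ContinuousOn f (spectrum ℝ S) := hfc.mono hspecSJ
  have hf'S : ContinuousOn f' (spectrum ℝ S) := hf'c.mono hspecSJ
  have hfA : ∀ i, ContinuousOn f (spectrum ℝ (A i)) := fun i => hfc.mono (hspec i)
  have hPhisa : ∀ i (T : H →L[ℂ] H), IsSelfAdjoint T → IsSelfAdjoint (Φ i T) := by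
    intro i T hT
    have h1 : algebraMap ℝ (H →L[ℂ] H) (-‖T‖) ≤ T := by
      rw [map_neg]; exact hT.neg_algebraMap_norm_le_self
    have h2 : (Φ i T - Φ i (algebraMap ℝ _ (-‖T‖))).IsPositive := by
      rw [← map_sub]; exact hΦpos i _ ((ContinuousLinearMap.le_def _ _).mp h1)
    have h4 : IsSelfAdjoint (Φ i (algebraMap ℝ (H →L[ℂ] H) (-‖T‖))) := by
      rw [hPhialg]
      exact ojSaSmul _ _ (hΦpos i 1 ContinuousLinearMap.isPositive_one).isSelfAdjoint
    have h5 := h2.isSelfAdjoint.add h4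
    rwa [sub_add_cancel] at h5
  set D := cfc f' S with hD
  set F := cfc f S with hF
  set G := ∑ i, Φ i (cfc f (A i)) with hG
  have hGsa : IsSelfAdjoint G := by
    rw [hG, IsSelfAdjoint, star_sum]
    exact Finset.sum_congr rfl fun i _ => (hPhisa i _ (cfc_predicate f (A i))).star_eq
  have hbdd : BddAbove (Set.range (fun x : {x : K // ‖x‖ = 1} =>
      RCLike.re ⟪(D * S) (x : K), (x : K)⟫_ℂ
        - RCLike.re ⟪S (x : K), (x : K)⟫_ℂ * RCLike.re ⟪D (x : K), (x : K)⟫_ℂ)) := by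
    refine ⟨‖D * S‖ + ‖S‖ * ‖D‖, ?_⟩
    rintro y ⟨⟨x, hx⟩, rfl⟩
    have h1 := (ojReLeNorm (D * S) x hx).1
    have h2 := ojReLeNorm S x hx
    have h3 := ojReLeNorm D x hx
    have h4 : |RCLike.re ⟪S x, x⟫_ℂ| ≤ ‖S‖ := abs_le.mpr ⟨h2.2, h2.1⟩
    have h5 : |RCLike.re ⟪D x, x⟫_ℂ| ≤ ‖D‖ := abs_le.mpr ⟨h3.2, h3.1⟩
    have h6 : |RCLike.re ⟪S x, x⟫_ℂ * RCLike.re ⟪D x, x⟫_ℂ| ≤ ‖S‖ * ‖D‖ := by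
      rw [abs_mul]
      exact mul_le_mul h4 h5 (abs_nonneg _) ((abs_nonneg _).trans h4)
    have h7 := neg_abs_le (RCLike.re ⟪S x, x⟫_ℂ * RCLike.re ⟪D x, x⟫_ℂ)
    simp only
    linarith
  have key : ∀ x : K, ‖x‖ = 1 → RCLike.re ⟪F x, x⟫_ℂ ≤ RCLike.re ⟪G x, x⟫_ℂ + ζ := by
    intro x hx
    set s : ℝ := RCLike.re ⟪S x, x⟫_ℂ with hs
    have hx2 : ‖x‖ ^ 2 = 1 := by rw [hx]; norm_num
    have hsm : m ≤ s := by
      have h := ojInnerLe hmleS x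
      rw [ojAlgEval, hx2, mul_one] at h
      exact h
    have hsM : s ≤ M := by
      have h := ojInnerLe hSleM x
      rw [ojAlgEval, hx2, mul_one] at h
      exact h
    have hsJ : s ∈ J := hIccJ ⟨hsm, hsM⟩
    have hstep1 : F ≤ algebraMap ℝ _ (f s) + (D * S - s • D) := by
      have h1 : F ≤ cfc (fun t => f s + (f' t * t - s * f' t)) S := by
        refine cfc_mono (fun t ht => ?_) hfS ?_
        · have htJ := hspecSJ ht
          have h2 := ojTangent hf hf' s hsJ t htJ
          nlinarith [h2]
        · fun_prop (disch := assumption)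
      rwa [cfc_const_add _ _ S (by fun_prop (disch := assumption)) hSsa,
        cfc_sub _ _ S (by fun_prop (disch := assumption)) (by fun_prop (disch := assumption)),
        cfc_mul f' (fun t => t) S hf'S (by fun_prop), cfc_id' ℝ S hSsa,
        cfc_const_mul s f' S hf'S] at h1
    have hstep3 : algebraMap ℝ _ (f s) + (f' s • S - algebraMap ℝ _ (f' s * s)) ≤ G := by
      have h2 : ∀ i, algebraMap ℝ _ (f s) + (f' s • A i - algebraMap ℝ _ (f' s * s))
          ≤ cfc f (A i) := by
        intro i
        have h1 : cfc (fun t => f s + (f' s * t - f' s * s)) (A i) ≤ cfc f (A i) := by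
          refine cfc_mono (fun t ht => ?_) (by fun_prop) (hfA i)
          have htJ := hspec i ht
          have h3 := ojTangent hf hf' t htJ s hsJ
          nlinarith [h3]
        rwa [cfc_const_add _ _ (A i) (by fun_prop) (hA i),
          cfc_sub _ _ (A i) (by fun_prop) (by fun_prop),
          cfc_const_mul_id (f' s) (A i) (hA i), cfc_const (f' s * s) (A i) (hA i)] at h1
      have hsumL : ∑ i, Φ i (algebraMap ℝ _ (f s) + (f' s • A i - algebraMap ℝ _ (f' s * s)))
          = algebraMap ℝ (K →L[ℂ] K) (f s) + (f' s • S - algebraMap ℝ _ (f' s * s)) := by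
        simp only [map_add, map_sub, hPhialg, hPhismul]
        rw [Finset.sum_add_distrib, Finset.sum_sub_distrib, ← Finset.smul_sum, ← Finset.smul_sum,
          ← Finset.smul_sum, hunital, ← hS, Algebra.algebraMap_eq_smul_one (A := K →L[ℂ] K),
          Algebra.algebraMap_eq_smul_one (A := K →L[ℂ] K)]
      calc algebraMap ℝ (K →L[ℂ] K) (f s) + (f' s • S - algebraMap ℝ _ (f' s * s))
          = ∑ i, Φ i (algebraMap ℝ _ (f s) + (f' s • A i - algebraMap ℝ _ (f' s * s))) :=
            hsumL.symm
        _ ≤ G := by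
            rw [hG]
            exact Finset.sum_le_sum fun i _ => hPhimono i (h2 i)
    have e1 := ojInnerLe hstep1 x
    rw [ojAddEval, ojSubEval, ojSmulEval, ojAlgEval, hx2, mul_one] at e1
    have e3 := ojInnerLe hstep3 x
    rw [ojAddEval, ojSubEval, ojSmulEval, ojAlgEval, ojAlgEval, hx2, mul_one, mul_one] at e3
    rw [← hs] at e3
    have e2 : RCLike.re ⟪(D * S) x, x⟫_ℂ - s * RCLike.re ⟪D x, x⟫_ℂ ≤ ζ := by
      rw [hζ]
      exact le_ciSup hbdd ⟨x, hx⟩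
    linarith
  rw [ContinuousLinearMap.le_def]
  refine ⟨ContinuousLinearMap.isSelfAdjoint_iff_isSymmetric.mp ((hGsa.add (ojSaSmul ζ 1 (IsSelfAdjoint.one _))).sub (cfc_predicate f S)), fun y => ?_⟩
  show 0 ≤ RCLike.re ⟪(G + ζ • (1 : K →L[ℂ] K) - F) y, y⟫_ℂ
  rcases eq_or_ne y 0 with rfl | hy
  · simp
  · have hny : ‖y‖ ≠ 0 := norm_ne_zero_iff.mpr hy
    set u : K := ‖y‖⁻¹ • y with hu
    have hu1 : ‖u‖ = 1 := by
      rw [hu, norm_smul, norm_inv, norm_norm, inv_mul_cancel₀ hny]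
    have hyu : y = ‖y‖ • u := by
      rw [hu, smul_smul, mul_inv_cancel₀ hny, one_smul]
    have goal_eq : RCLike.re ⟪(G + ζ • (1 : K →L[ℂ] K) - F) y, y⟫_ℂ
        = ‖y‖ ^ 2 * RCLike.re ⟪(G + ζ • (1 : K →L[ℂ] K) - F) u, u⟫_ℂ := by
      conv_lhs => rw [hyu]
      rw [ojQsmul]
    rw [goal_eq]
    have h1u : RCLike.re ⟪(1 : K →L[ℂ] K) u, u⟫_ℂ = 1 := by
      simp only [ContinuousLinearMap.one_apply]
      rw [@inner_self_eq_norm_sq ℂ, hu1, one_pow]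
    have hexp : RCLike.re ⟪(G + ζ • (1 : K →L[ℂ] K) - F) u, u⟫_ℂ
        = RCLike.re ⟪G u, u⟫_ℂ + ζ - RCLike.re ⟪F u, u⟫_ℂ := by
      rw [ojSubEval, ojAddEval, ojSmulEval, h1u, mul_one]
    rw [hexp]
    have hk := key u hu1
    have := mul_nonneg (sq_nonneg ‖y‖)
      (sub_nonneg.mpr (by linarith : RCLike.re ⟪F u, u⟫_ℂ ≤ RCLike.re ⟪G u, u⟫_ℂ + ζ))
    nlinarith [this]
end

section
/- Let A₁,…,Aₙ be positive operators on H, Φ₁,…,Φₙ : B(H) → B(K) positive linear maps with ∑ᵢ Φᵢ(1_H) = 1_K, and p ≥ 1. Write S = ∑ᵢ Φᵢ(Aᵢ) and define ζ = sup over unit vectors x ∈ K of (⟨Sᵖ x, x⟩ − ⟨S x, x⟩·⟨S^{p−1} x, x⟩). Then Sᵖ ≤ ∑ᵢ Φᵢ(Aᵢᵖ) + p·ζ·1_K. -/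
set_option maxHeartbeats 2000000
set_option synthInstance.maxHeartbeats 400000


open scoped InnerProductSpace

section Aux

lemma cont_rpow {q : ℝ} (hq : 0 ≤ q) : Continuous fun t : ℝ => t ^ q := by
  rcases hq.eq_or_lt with h | h
  · have : (fun t : ℝ => t ^ q) = fun _ : ℝ => (1:ℝ) := by
      funext t; rw [← h, Real.rpow_zero]
    rw [this]; exact continuous_const
  · rw [continuous_iff_continuousAt]; intro x
    exact Real.continuousAt_rpow_const x q (Or.inr h.le)

lemma tangent_scalar {p : ℝ} (hp : 1 ≤ p) {s t : ℝ} (hs : 0 ≤ s) (ht : 0 ≤ t) :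
    p * s ^ (p-1) * t + (s ^ p - p * s ^ (p-1) * s) ≤ t ^ p := by
  rcases hs.eq_or_lt with h | h
  · rcases hp.eq_or_lt with h1 | h1
    · simp [← h, ← h1, Real.rpow_one]
    · rw [← h, Real.zero_rpow (by positivity : p ≠ 0),
        Real.zero_rpow (by intro h2; rw [sub_eq_zero] at h2; exact h1.ne h2.symm)]
      simpa using Real.rpow_nonneg ht p
  · have hsne : s ≠ 0 := h.ne'
    have h1 : s ^ (p-1) * s = s ^ p := by
      rw [← Real.rpow_add_one hsne (p-1), sub_add_cancel]
    have hb := one_add_mul_self_le_rpow_one_add (s := t/s - 1) (by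
      have : 0 ≤ t / s := by positivity
      linarith) hp
    rw [add_sub_cancel, Real.div_rpow ht h.le] at hb
    have hsp : (0:ℝ) < s ^ p := Real.rpow_pos_of_pos h p
    have hb2 := mul_le_mul_of_nonneg_right hb hsp.le
    rw [div_mul_cancel₀ _ hsp.ne'] at hb2
    calc p * s ^ (p-1) * t + (s ^ p - p * s ^ (p-1) * s)
        = (1 + p * (t / s - 1)) * s ^ p := by
          rw [← h1]; field_simp; ring
      _ ≤ t ^ p := hb2

variable {V : Type*} [NormedAddCommGroup V] [InnerProductSpace ℂ V] [CompleteSpace V]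

lemma cfc_linear (c₁ c₂ : ℝ) (a : V →L[ℂ] V) (ha : IsSelfAdjoint a) :
    cfc (fun t : ℝ => c₁ * t + c₂) a = c₁ • a + c₂ • (1 : V →L[ℂ] V) := by
  rw [cfc_add a (fun t => c₁ * t) (fun _ => c₂) (by fun_prop) (by fun_prop),
    cfc_const_mul_id c₁ a ha, cfc_const c₂ a ha, Algebra.algebraMap_eq_smul_one]

lemma inner_mono' {T T' : V →L[ℂ] V} (h : T ≤ T') (x : V) :
    RCLike.re ⟪T x, x⟫_ℂ ≤ RCLike.re ⟪T' x, x⟫_ℂ := by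
  rw [ContinuousLinearMap.le_def] at h
  have := h.2 x
  rw [ContinuousLinearMap.reApplyInnerSelf_apply, ContinuousLinearMap.sub_apply,
    inner_sub_left, map_sub] at this
  linarith

lemma re_smul_inner (r : ℝ) (v x : V) :
    RCLike.re ⟪r • v, x⟫_ℂ = r * RCLike.re ⟪v, x⟫_ℂ := by
  rw [RCLike.real_smul_eq_coe_smul (K := ℂ), inner_smul_left, RCLike.conj_ofReal]
  simp

lemma re_inner_le_norm' (T : V →L[ℂ] V) (x : V) (hx : ‖x‖ = 1) :
    RCLike.re ⟪T x, x⟫_ℂ ≤ ‖T‖ := by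
  calc RCLike.re ⟪T x, x⟫_ℂ ≤ ‖⟪T x, x⟫_ℂ‖ := RCLike.re_le_norm _
    _ ≤ ‖T x‖ * ‖x‖ := norm_inner_le_norm _ _
    _ ≤ (‖T‖ * ‖x‖) * ‖x‖ := by gcongr; exact T.le_opNorm x
    _ = ‖T‖ := by rw [hx]; ring

end Aux

/-- Operator Jensen-type inequality for powers `p ≥ 1` without operator convexity. -/
theorem operator_jensen_pow {H K : Type*}
    [NormedAddCommGroup H] [InnerProductSpace ℂ H] [CompleteSpace H]
    [NormedAddCommGroup K] [InnerProductSpace ℂ K] [CompleteSpace K]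
    (p : ℝ) (hp : 1 ≤ p)
    (n : ℕ) (A : Fin n → H →L[ℂ] H)
    (Φ : Fin n → (H →L[ℂ] H) →ₗ[ℂ] (K →L[ℂ] K))
    (hA : ∀ i, (A i).IsPositive)
    (hΦpos : ∀ i, ∀ T : H →L[ℂ] H, T.IsPositive → (Φ i T).IsPositive)
    (hunital : ∑ i, Φ i 1 = 1)
    (S : K →L[ℂ] K) (hS : S = ∑ i, Φ i (A i))
    (ζ : ℝ)
    (hζ : ζ = ⨆ x : {x : K // ‖x‖ = 1},
      (RCLike.re ⟪cfc (fun t : ℝ => t ^ p) S (x : K), (x : K)⟫_ℂ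
        - RCLike.re ⟪S (x : K), (x : K)⟫_ℂ
          * RCLike.re ⟪cfc (fun t : ℝ => t ^ (p - 1)) S (x : K), (x : K)⟫_ℂ)) :
    cfc (fun t : ℝ => t ^ p) S ≤
      ∑ i, Φ i (cfc (fun t : ℝ => t ^ p) (A i)) + (p * ζ) • (1 : K →L[ℂ] K) := by
  have hp0 : (0:ℝ) ≤ p := by linarith
  have hp1 : (0:ℝ) ≤ p - 1 := by linarith
  set f : ℝ → ℝ := fun t => t ^ p with hfdef
  set f1 : ℝ → ℝ := fun t => t ^ (p-1) with hf1def
  have hfc : Continuous f := cont_rpow hp0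
  have hf1c : Continuous f1 := cont_rpow hp1
  -- monotonicity of each Φ i
  have hΦmono : ∀ i, ∀ T T' : H →L[ℂ] H, T ≤ T' → Φ i T ≤ Φ i T' := by
    intro i T T' h
    rw [ContinuousLinearMap.le_def] at h ⊢
    have := hΦpos i _ h
    rwa [map_sub] at this
  -- sums of nonneg operators
  have hsum_le : ∀ (G L : Fin n → K →L[ℂ] K), (∀ i, G i ≤ L i) → ∑ i, G i ≤ ∑ i, L i := by
    intro G L h
    rw [ContinuousLinearMap.le_def, ← Finset.sum_sub_distrib]
    exact Finset.sum_induction _ ContinuousLinearMap.IsPositive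
      (fun a b ha hb => ha.add hb) ContinuousLinearMap.isPositive_zero
      (fun i _ => (ContinuousLinearMap.le_def _ _).mp (h i))
  have hsum_pos : ∀ (G : Fin n → K →L[ℂ] K), (∀ i, 0 ≤ G i) → 0 ≤ ∑ i, G i := by
    intro G h
    have := hsum_le (fun _ => 0) G h
    simpa using this
  have hSpos : 0 ≤ S := by
    rw [hS]
    exact hsum_pos _ fun i =>
      (ContinuousLinearMap.nonneg_iff_isPositive _).mpr (hΦpos i _ (hA i))
  have hSsa : IsSelfAdjoint S :=
    ((ContinuousLinearMap.nonneg_iff_isPositive S).mp hSpos).isSelfAdjoint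
  have hSspec : ∀ t ∈ spectrum ℝ S, 0 ≤ t :=
    (StarOrderedRing.nonneg_iff_spectrum_nonneg (R := ℝ) S hSsa).mp hSpos
  have hAspec : ∀ i, ∀ t ∈ spectrum ℝ (A i), 0 ≤ t := fun i =>
    (StarOrderedRing.nonneg_iff_spectrum_nonneg (R := ℝ) (A i) (hA i).isSelfAdjoint).mp
      ((ContinuousLinearMap.nonneg_iff_isPositive _).mpr (hA i))
  set E : K →L[ℂ] K := ∑ i, Φ i (cfc f (A i)) with hEdef
  have hfAi : ∀ i, (cfc f (A i)).IsPositive := fun i =>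
    (ContinuousLinearMap.nonneg_iff_isPositive _).mp
      (cfc_nonneg fun t ht => Real.rpow_nonneg (hAspec i t ht) p)
  have hEpos : 0 ≤ E :=
    hsum_pos _ fun i =>
      (ContinuousLinearMap.nonneg_iff_isPositive _).mpr (hΦpos i _ (hfAi i))
  have hf1S : 0 ≤ cfc f1 S := cfc_nonneg fun t ht => Real.rpow_nonneg (hSspec t ht) _
  have hfS_sa : IsSelfAdjoint (cfc f S) := cfc_predicate f S
  -- the tangent-line lower bound for E
  have hlow : ∀ s : ℝ, 0 ≤ s →
      (p * s ^ (p-1)) • S + (s ^ p - p * s ^ (p-1) * s) • (1 : K →L[ℂ] K) ≤ E := by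
    intro s hs
    have step : ∀ i,
        (p * s ^ (p-1)) • Φ i (A i) + (s ^ p - p * s ^ (p-1) * s) • Φ i 1
          ≤ Φ i (cfc f (A i)) := by
      intro i
      have h1 : (p * s ^ (p-1)) • (A i) + (s ^ p - p * s ^ (p-1) * s) • (1 : H →L[ℂ] H)
          ≤ cfc f (A i) := by
        have h2 := cfc_mono
          (f := fun t : ℝ => (p * s ^ (p-1)) * t + (s ^ p - p * s ^ (p-1) * s))
          (g := f) (a := A i)
          (fun t ht => tangent_scalar hp hs (hAspec i t ht)) (by fun_prop)
          hfc.continuousOn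
        rwa [cfc_linear _ _ _ (hA i).isSelfAdjoint] at h2
      have h3 := hΦmono i _ _ h1
      rwa [map_add, LinearMap.map_smul_of_tower, LinearMap.map_smul_of_tower] at h3
    calc (p * s ^ (p-1)) • S + (s ^ p - p * s ^ (p-1) * s) • (1 : K →L[ℂ] K)
        = ∑ i, ((p * s ^ (p-1)) • Φ i (A i) + (s ^ p - p * s ^ (p-1) * s) • Φ i 1) := by
          rw [hS, ← hunital, Finset.sum_add_distrib, Finset.smul_sum, Finset.smul_sum]
      _ ≤ E := hsum_le _ _ step
  -- key pointwise inequality on unit vectors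
  have key : ∀ x : K, ‖x‖ = 1 →
      RCLike.re ⟪cfc f S x, x⟫_ℂ ≤ RCLike.re ⟪E x, x⟫_ℂ + p * ζ := by
    intro x hx
    set s : ℝ := RCLike.re ⟪S x, x⟫_ℂ with hsdef
    have hs : 0 ≤ s := ((ContinuousLinearMap.nonneg_iff_isPositive S).mp hSpos).re_inner_nonneg_left x
    set X : ℝ := RCLike.re ⟪cfc f S x, x⟫_ℂ with hXdef
    set Y : ℝ := RCLike.re ⟪cfc f1 S x, x⟫_ℂ with hYdef
    have hY : 0 ≤ Y :=
      ((ContinuousLinearMap.nonneg_iff_isPositive _).mp hf1S).re_inner_nonneg_left x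
    have hx2 : RCLike.re ⟪x, x⟫_ℂ = 1 := by rw [inner_self_eq_norm_sq, hx]; norm_num
    -- F1
    have hF1 : s ^ p ≤ RCLike.re ⟪E x, x⟫_ℂ := by
      have h4 := inner_mono' (hlow s hs) x
      rw [ContinuousLinearMap.add_apply, ContinuousLinearMap.smul_apply,
        ContinuousLinearMap.smul_apply, ContinuousLinearMap.one_apply, inner_add_left,
        map_add, re_smul_inner, re_smul_inner, hx2, ← hsdef] at h4
      calc s ^ p = p * s ^ (p-1) * s + (s ^ p - p * s ^ (p-1) * s) * 1 := by ring
        _ ≤ RCLike.re ⟪E x, x⟫_ℂ := h4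
    -- F3
    have hF3 : 0 ≤ (p-1) * X - (p * s) * Y + s ^ p := by
      have hG : 0 ≤ cfc (fun t : ℝ => ((p-1) * f t - (p * s) * f1 t) + s ^ p) S := by
        refine cfc_nonneg fun t ht => ?_
        have ht0 := hSspec t ht
        rcases ht0.eq_or_lt with h | h
        · simp only [hfdef, hf1def, ← h]
          rcases hp.eq_or_lt with h1 | h1
          · rw [← h1]; norm_num
          · rw [Real.zero_rpow (by positivity : p ≠ 0),
              Real.zero_rpow (by intro h2; rw [sub_eq_zero] at h2; exact h1.ne h2.symm)]
            simpa using Real.rpow_nonneg hs p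
        · have h5 : t ^ (p-1) * t = t ^ p := by
            rw [← Real.rpow_add_one h.ne' (p-1), sub_add_cancel]
          have h6 := tangent_scalar hp ht0 hs
          simp only [hfdef, hf1def]
          nlinarith [h5, h6]
      rw [cfc_add S (fun t => (p-1) * f t - (p * s) * f1 t) (fun _ => s ^ p)
            (by fun_prop) (by fun_prop),
          cfc_sub (fun t => (p-1) * f t) (fun t => (p * s) * f1 t) S
            (by fun_prop) (by fun_prop),
          cfc_const_mul (p-1) f S hfc.continuousOn,
          cfc_const_mul (p * s) f1 S hf1c.continuousOn,
          cfc_const (s ^ p) S hSsa] at hG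
      have h7 := ((ContinuousLinearMap.nonneg_iff_isPositive _).mp hG).re_inner_nonneg_left x
      rw [ContinuousLinearMap.add_apply,
        ContinuousLinearMap.sub_apply, ContinuousLinearMap.smul_apply,
        ContinuousLinearMap.smul_apply, Algebra.algebraMap_eq_smul_one,
        ContinuousLinearMap.smul_apply, ContinuousLinearMap.one_apply, inner_add_left,
        inner_sub_left, map_add, map_sub, re_smul_inner, re_smul_inner, re_smul_inner,
        hx2, ← hXdef, ← hYdef] at h7
      linarith
    -- F2 : via the supremum
    have hbdd : BddAbove (Set.range fun u : {x : K // ‖x‖ = 1} =>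
        (RCLike.re ⟪cfc f S (u : K), (u : K)⟫_ℂ
          - RCLike.re ⟪S (u : K), (u : K)⟫_ℂ
            * RCLike.re ⟪cfc f1 S (u : K), (u : K)⟫_ℂ)) := by
      refine ⟨‖cfc f S‖, Set.forall_mem_range.mpr fun u => ?_⟩
      have h1 := re_inner_le_norm' (cfc f S) (u : K) u.2
      have h2 : 0 ≤ RCLike.re ⟪S (u : K), (u : K)⟫_ℂ :=
        ((ContinuousLinearMap.nonneg_iff_isPositive S).mp hSpos).re_inner_nonneg_left _
      have h3 : 0 ≤ RCLike.re ⟪cfc f1 S (u : K), (u : K)⟫_ℂ :=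
        ((ContinuousLinearMap.nonneg_iff_isPositive _).mp hf1S).re_inner_nonneg_left _
      nlinarith
    have hF2 : X - s * Y ≤ ζ := by
      rw [hζ]
      exact le_ciSup hbdd ⟨x, hx⟩
    have hmul := mul_le_mul_of_nonneg_left hF2 hp0
    nlinarith [hF1, hF3, hmul]
  -- assemble
  rw [ContinuousLinearMap.le_def]
  set D : K →L[ℂ] K := E + (p * ζ) • (1 : K →L[ℂ] K) - cfc f S with hDdef
  have hsa : IsSelfAdjoint D := by
    have h1 : IsSelfAdjoint E :=
      ((ContinuousLinearMap.nonneg_iff_isPositive E).mp hEpos).isSelfAdjoint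
    have h2 : IsSelfAdjoint ((p * ζ) • (1 : K →L[ℂ] K)) :=
      IsSelfAdjoint.smul (star_trivial _) (IsSelfAdjoint.one _)
    exact (h1.add h2).sub hfS_sa
  refine ⟨ContinuousLinearMap.isSelfAdjoint_iff_isSymmetric.mp hsa, fun x => ?_⟩
  rw [ContinuousLinearMap.reApplyInnerSelf_apply]
  rcases eq_or_ne x 0 with rfl | hx0
  · simp
  · set u : K := ‖x‖⁻¹ • x with hu
    have hun : ‖u‖ = 1 := norm_smul_inv_norm hx0
    have hu2 : RCLike.re ⟪u, u⟫_ℂ = 1 := by rw [inner_self_eq_norm_sq, hun]; norm_num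
    have hk := key u hun
    have hDu : 0 ≤ RCLike.re ⟪D u, u⟫_ℂ := by
      have h8 : RCLike.re ⟪D u, u⟫_ℂ
          = RCLike.re ⟪E u, u⟫_ℂ + p * ζ - RCLike.re ⟪cfc f S u, u⟫_ℂ := by
        rw [hDdef, ContinuousLinearMap.sub_apply, ContinuousLinearMap.add_apply,
          ContinuousLinearMap.smul_apply, ContinuousLinearMap.one_apply, inner_sub_left,
          inner_add_left, map_sub, map_add, re_smul_inner, hu2]
        ring
      linarith
    have hxu : x = ‖x‖ • u := by
      rw [hu, smul_smul, mul_inv_cancel₀ (norm_ne_zero_iff.mpr hx0), one_smul]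
    have hDx : RCLike.re ⟪D x, x⟫_ℂ = ‖x‖ ^ 2 * RCLike.re ⟪D u, u⟫_ℂ := by
      conv_lhs => rw [hxu]
      rw [ContinuousLinearMap.map_smul_of_tower, re_smul_inner,
        RCLike.real_smul_eq_coe_smul (K := ℂ) (‖x‖), inner_smul_right]
      simp [RCLike.conj_ofReal]
      ring
    rw [hDx]
    have : (0:ℝ) ≤ ‖x‖ ^ 2 := sq_nonneg _
    positivity
end

section
/- Let f : ℝ → ℝ be convex differentiable on J, A₁,…,Aₙ self-adjoint with spectra in J, and w₁,…,wₙ positive reals summing to 1. Define δ = sup over unit vectors x of (⟨∑ᵢ wᵢ f'(Aᵢ)Aᵢ x, x⟩ − ⟨∑ᵢ wᵢ Aᵢ x, x⟩·⟨∑ᵢ wᵢ f'(Aᵢ) x, x⟩). Then ∑ᵢ wᵢ f(Aᵢ) ≤ f(∑ᵢ wᵢ Aᵢ) + δ·1. -/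
open scoped InnerProductSpace

section RojwAux

open RCLike ContinuousLinearMap

variable {H : Type*} [NormedAddCommGroup H] [InnerProductSpace ℂ H] [CompleteSpace H]

/-- Tangent line of a convex differentiable function lies below the function. -/
lemma rojw_tangent {f f' : ℝ → ℝ} {J : Set ℝ} (hf : ConvexOn ℝ J f)
    (hd : ∀ t ∈ J, HasDerivAt f (f' t) t) {s t : ℝ} (hs : s ∈ J) (ht : t ∈ J) :
    f s + f' s * (t - s) ≤ f t := by
  rcases lt_trichotomy s t with h | h | h
  · have h1 := hf.le_slope_of_hasDerivAt hs ht h (hd s hs)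
    rw [slope_def_field] at h1
    have h2 : 0 < t - s := sub_pos.mpr h
    rw [le_div_iff₀ h2] at h1
    linarith
  · simp [h]
  · have h1 := hf.slope_le_of_hasDerivAt ht hs h (hd s hs)
    rw [slope_def_field] at h1
    have h2 : 0 < s - t := sub_pos.mpr h
    rw [div_le_iff₀ h2] at h1
    nlinarith

lemma rojw_inner_le {T S : H →L[ℂ] H} (h : T ≤ S) (x : H) :
    re ⟪T x, x⟫_ℂ ≤ re ⟪S x, x⟫_ℂ := by
  simpa [ContinuousLinearMap.reApplyInnerSelf, ContinuousLinearMap.sub_apply, inner_sub_left,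
    sub_nonneg] using h.2 x

lemma rojw_le_of_inner {T S : H →L[ℂ] H} (hT : IsSelfAdjoint T) (hS : IsSelfAdjoint S)
    (h : ∀ x : H, re ⟪T x, x⟫_ℂ ≤ re ⟪S x, x⟫_ℂ) : T ≤ S := by
  rw [ContinuousLinearMap.le_def]
  refine ⟨(hS.sub hT).isSymmetric, fun x => ?_⟩
  simpa [ContinuousLinearMap.reApplyInnerSelf, ContinuousLinearMap.sub_apply, inner_sub_left,
    sub_nonneg] using h x

lemma rojw_re_smul_left (r : ℝ) (v x : H) : re ⟪r • v, x⟫_ℂ = r * re ⟪v, x⟫_ℂ := by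
  rw [RCLike.real_smul_eq_coe_smul (K := ℂ) r v, inner_smul_real_left, smul_re]

lemma rojw_re_smul_right (r : ℝ) (v x : H) : re ⟪x, r • v⟫_ℂ = r * re ⟪x, v⟫_ℂ := by
  rw [RCLike.real_smul_eq_coe_smul (K := ℂ) r v, inner_smul_real_right, smul_re]

lemma rojw_phi_sum {n : ℕ} (w : Fin n → ℝ) (T : Fin n → H →L[ℂ] H) (x : H) :
    re ⟪(∑ i, w i • T i) x, x⟫_ℂ = ∑ i, w i * re ⟪(T i) x, x⟫_ℂ := by
  rw [ContinuousLinearMap.sum_apply, sum_inner, map_sum]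
  refine Finset.sum_congr rfl fun i _ => ?_
  rw [ContinuousLinearMap.smul_apply, rojw_re_smul_left]

lemma rojw_phi_smul_one (r : ℝ) (x : H) :
    re ⟪(r • (1 : H →L[ℂ] H)) x, x⟫_ℂ = r * ‖x‖ ^ 2 := by
  rw [ContinuousLinearMap.smul_apply, ContinuousLinearMap.one_apply, rojw_re_smul_left,
    inner_self_eq_norm_sq]

lemma rojw_phi_scale (T : H →L[ℂ] H) (c : ℝ) (u : H) :
    re ⟪T (c • u), c • u⟫_ℂ = c ^ 2 * re ⟪T u, u⟫_ℂ := by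
  rw [T.map_smul_of_tower, rojw_re_smul_left, rojw_re_smul_right]
  ring

end RojwAux

open RCLike

set_option maxHeartbeats 2000000 in
/-- Scalar-weight reverse operator Jensen inequality. -/
theorem reverse_operator_jensen_weights {H : Type*}
    [NormedAddCommGroup H] [InnerProductSpace ℂ H] [CompleteSpace H]
    (f f' : ℝ → ℝ) (J : Set ℝ) (hf : ConvexOn ℝ J f)
    (hf' : ∀ t ∈ J, HasDerivAt f (f' t) t) (hf'c : ContinuousOn f' J)
    (n : ℕ) (A : Fin n → H →L[ℂ] H) (w : Fin n → ℝ)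
    (hA : ∀ i, IsSelfAdjoint (A i)) (hspec : ∀ i, spectrum ℝ (A i) ⊆ J)
    (hw : ∀ i, 0 < w i) (hw1 : ∑ i, w i = 1)
    (δ : ℝ)
    (hδ : δ = ⨆ x : {x : H // ‖x‖ = 1},
      (RCLike.re ⟪(∑ i, w i • (cfc f' (A i) * A i)) (x : H), (x : H)⟫_ℂ
        - RCLike.re ⟪(∑ i, w i • A i) (x : H), (x : H)⟫_ℂ
          * RCLike.re ⟪(∑ i, w i • cfc f' (A i)) (x : H), (x : H)⟫_ℂ)) :
    ∑ i, w i • cfc f (A i) ≤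
      cfc f (∑ i, w i • A i) + δ • (1 : H →L[ℂ] H) := by
  rcases subsingleton_or_nontrivial H with hH | hH
  · exact le_of_eq (Subsingleton.elim _ _)
  classical
  haveI : Nontrivial (H →L[ℂ] H) := by
    obtain ⟨x, hx⟩ := exists_ne (0 : H)
    exact ⟨0, 1, fun h => hx (by simpa using congrArg (fun T : H →L[ℂ] H => T x) h.symm)⟩
  set B : H →L[ℂ] H := ∑ i, w i • (cfc f' (A i) * A i) with hB_def
  set C : H →L[ℂ] H := ∑ i, w i • cfc f' (A i) with hC_def
  set As : H →L[ℂ] H := ∑ i, w i • A i with hAs_def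
  -- continuity of f on J
  have hfc : ContinuousOn f J := fun t ht => (hf' t ht).continuousAt.continuousWithinAt
  -- selfadjointness facts
  have hsa_sum : ∀ (T : Fin n → H →L[ℂ] H), (∀ i, IsSelfAdjoint (T i)) →
      IsSelfAdjoint (∑ i, w i • T i) := fun T hT => by
    rw [isSelfAdjoint_iff, star_sum]
    exact Finset.sum_congr rfl fun i _ => (IsSelfAdjoint.smul (star_trivial (w i)) (hT i)).star_eq
  have hAsum : IsSelfAdjoint As := hsa_sum A hA
  -- spectral bounds for each A i
  have hcpt : ∀ i, IsCompact (spectrum ℝ (A i)) := fun i => spectrum.isCompact (A i)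
  have hne : ∀ i, (spectrum ℝ (A i)).Nonempty := fun i => (hA i).spectrum_nonempty
  set m : Fin n → ℝ := fun i => sInf (spectrum ℝ (A i)) with hm_def
  set M : Fin n → ℝ := fun i => sSup (spectrum ℝ (A i)) with hM_def
  have hmJ : ∀ i, m i ∈ J := fun i => hspec i ((hcpt i).sInf_mem (hne i))
  have hMJ : ∀ i, M i ∈ J := fun i => hspec i ((hcpt i).sSup_mem (hne i))
  have hop_le : ∀ i, A i ≤ algebraMap ℝ (H →L[ℂ] H) (M i) := fun i =>
    le_algebraMap_of_spectrum_le (fun t ht => le_csSup (hcpt i).bddAbove ht) (hA i)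
  have hop_ge : ∀ i, algebraMap ℝ (H →L[ℂ] H) (m i) ≤ A i := fun i =>
    algebraMap_le_of_le_spectrum (fun t ht => csInf_le (hcpt i).bddBelow ht) (hA i)
  have hphi_alg : ∀ (r : ℝ) (x : H), re ⟪(algebraMap ℝ (H →L[ℂ] H) r) x, x⟫_ℂ = r * ‖x‖ ^ 2 := by
    intro r x
    rw [Algebra.algebraMap_eq_smul_one]
    exact rojw_phi_smul_one r x
  have hinner_ub : ∀ i (x : H), re ⟪(A i) x, x⟫_ℂ ≤ M i * ‖x‖ ^ 2 := fun i x =>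
    (hphi_alg (M i) x) ▸ rojw_inner_le (hop_le i) x
  have hinner_lb : ∀ i (x : H), m i * ‖x‖ ^ 2 ≤ re ⟪(A i) x, x⟫_ℂ := fun i x =>
    (hphi_alg (m i) x) ▸ rojw_inner_le (hop_ge i) x
  have hmJsum : (∑ i, w i * m i) ∈ J := by
    simpa [smul_eq_mul] using hf.1.sum_mem (fun i _ => (hw i).le) hw1 (fun i _ => hmJ i)
  have hMJsum : (∑ i, w i * M i) ∈ J := by
    simpa [smul_eq_mul] using hf.1.sum_mem (fun i _ => (hw i).le) hw1 (fun i _ => hMJ i)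
  have hAs_ub : As ≤ algebraMap ℝ (H →L[ℂ] H) (∑ i, w i * M i) := by
    refine rojw_le_of_inner hAsum ?_ ?_
    · rw [Algebra.algebraMap_eq_smul_one, isSelfAdjoint_iff, star_smul, star_trivial, star_one]
    · intro x
      rw [hphi_alg, hAs_def, rojw_phi_sum, Finset.sum_mul]
      exact Finset.sum_le_sum fun i _ => by
        rw [mul_assoc]
        exact mul_le_mul_of_nonneg_left (hinner_ub i x) (hw i).le
  have hAs_lb : algebraMap ℝ (H →L[ℂ] H) (∑ i, w i * m i) ≤ As := by
    refine rojw_le_of_inner ?_ hAsum ?_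
    · rw [Algebra.algebraMap_eq_smul_one, isSelfAdjoint_iff, star_smul, star_trivial, star_one]
    · intro x
      rw [hphi_alg, hAs_def, rojw_phi_sum, Finset.sum_mul]
      exact Finset.sum_le_sum fun i _ => by
        rw [mul_assoc]
        exact mul_le_mul_of_nonneg_left (hinner_lb i x) (hw i).le
  have hspecAs : spectrum ℝ As ⊆ J := by
    intro t ht
    have h1 : t ≤ ∑ i, w i * M i :=
      (le_algebraMap_iff_spectrum_le (a := As) hAsum).mp hAs_ub t ht
    have h2 : (∑ i, w i * m i) ≤ t :=
      (algebraMap_le_iff_le_spectrum (a := As) hAsum).mp hAs_lb t ht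
    exact hf.1.ordConnected.out hmJsum hMJsum ⟨h2, h1⟩
  -- the key estimate for unit vectors
  have key : ∀ x : H, ‖x‖ = 1 →
      re ⟪(∑ i, w i • cfc f (A i)) x, x⟫_ℂ ≤ re ⟪(cfc f As + δ • (1 : H →L[ℂ] H)) x, x⟫_ℂ := by
    intro x hx
    set s : ℝ := re ⟪As x, x⟫_ℂ with hs_def
    have hsJ : s ∈ J := by
      have hmem : ∀ i, re ⟪(A i) x, x⟫_ℂ ∈ J := fun i =>
        hf.1.ordConnected.out (hmJ i) (hMJ i)
          ⟨by simpa [hx] using hinner_lb i x, by simpa [hx] using hinner_ub i x⟩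
      have : s = ∑ i, w i * re ⟪(A i) x, x⟫_ℂ := by
        rw [hs_def, hAs_def, rojw_phi_sum]
      rw [this]
      simpa [smul_eq_mul] using hf.1.sum_mem (fun i _ => (hw i).le) hw1 (fun i _ => hmem i)
    -- step 1 : per-index operator inequality
    have step1 : ∀ i, re ⟪(cfc f (A i)) x, x⟫_ℂ ≤
        re ⟪(cfc f' (A i) * A i) x, x⟫_ℂ - s * re ⟪(cfc f' (A i)) x, x⟫_ℂ + f s := by
      intro i
      have hcont1 : ContinuousOn f (spectrum ℝ (A i)) := hfc.mono (hspec i)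
      have hcont2 : ContinuousOn f' (spectrum ℝ (A i)) := hf'c.mono (hspec i)
      have hca : ContinuousOn (fun t : ℝ => f' t * t) (spectrum ℝ (A i)) :=
        hcont2.mul continuousOn_id
      have hcb : ContinuousOn (fun t : ℝ => s * f' t) (spectrum ℝ (A i)) :=
        continuousOn_const.mul hcont2
      have hop : cfc f (A i) ≤ cfc (fun t : ℝ => (f' t * t - s * f' t) + f s) (A i) := by
        refine cfc_mono (fun t ht => ?_) hcont1 (((hca.sub hcb)).add continuousOn_const)
        have h := rojw_tangent hf hf' (hspec i ht) hsJ
        nlinarith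
      have heq : cfc (fun t : ℝ => (f' t * t - s * f' t) + f s) (A i)
          = (cfc f' (A i) * A i - s • cfc f' (A i)) + (f s) • (1 : H →L[ℂ] H) := by
        rw [cfc_add_const (f s) (fun t : ℝ => f' t * t - s * f' t) (A i) (hca.sub hcb) (hA i),
          cfc_sub (fun t : ℝ => f' t * t) (fun t : ℝ => s * f' t) (A i) hca hcb,
          cfc_mul f' (fun t : ℝ => t) (A i) hcont2 continuousOn_id, cfc_id' ℝ (A i),
          cfc_const_mul s f' (A i) hcont2, Algebra.algebraMap_eq_smul_one]
      have h3 := rojw_inner_le (heq ▸ hop) x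
      have h4 : re ⟪(cfc f (A i)) x, x⟫_ℂ ≤
          re ⟪(cfc f' (A i) * A i) x, x⟫_ℂ - s * re ⟪(cfc f' (A i)) x, x⟫_ℂ
            + f s * ‖x‖ ^ 2 := by
        simpa only [ContinuousLinearMap.add_apply, ContinuousLinearMap.sub_apply,
          ContinuousLinearMap.smul_apply, ContinuousLinearMap.one_apply, inner_add_left,
          inner_sub_left, map_add, map_sub, rojw_re_smul_left,
          inner_self_eq_norm_sq] using h3
      rw [hx] at h4
      simpa using h4
    -- step 2 : sum over i
    have sum1 : ∑ i, w i * re ⟪(cfc f (A i)) x, x⟫_ℂ ≤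
        (∑ i, w i * re ⟪(cfc f' (A i) * A i) x, x⟫_ℂ)
          - s * (∑ i, w i * re ⟪(cfc f' (A i)) x, x⟫_ℂ) + f s := by
      calc ∑ i, w i * re ⟪(cfc f (A i)) x, x⟫_ℂ
          ≤ ∑ i, (w i * re ⟪(cfc f' (A i) * A i) x, x⟫_ℂ
              - s * (w i * re ⟪(cfc f' (A i)) x, x⟫_ℂ) + f s * w i) := by
            refine Finset.sum_le_sum fun i _ => ?_
            calc w i * re ⟪(cfc f (A i)) x, x⟫_ℂ
                ≤ w i * (re ⟪(cfc f' (A i) * A i) x, x⟫_ℂ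
                    - s * re ⟪(cfc f' (A i)) x, x⟫_ℂ + f s) :=
                  mul_le_mul_of_nonneg_left (step1 i) (hw i).le
              _ = w i * re ⟪(cfc f' (A i) * A i) x, x⟫_ℂ
                    - s * (w i * re ⟪(cfc f' (A i)) x, x⟫_ℂ) + f s * w i := by ring
        _ = (∑ i, w i * re ⟪(cfc f' (A i) * A i) x, x⟫_ℂ)
              - s * (∑ i, w i * re ⟪(cfc f' (A i)) x, x⟫_ℂ) + f s := by
            rw [Finset.sum_add_distrib, Finset.sum_sub_distrib, ← Finset.mul_sum,
              ← Finset.mul_sum, hw1, mul_one]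
    -- step 3 : bound via δ
    have hbdd : BddAbove (Set.range fun y : {y : H // ‖y‖ = 1} =>
        re ⟪B (y : H), (y : H)⟫_ℂ - re ⟪As (y : H), (y : H)⟫_ℂ * re ⟪C (y : H), (y : H)⟫_ℂ) := by
      refine ⟨‖B‖ + ‖As‖ * ‖C‖, Set.forall_mem_range.mpr fun y => ?_⟩
      have hy : ‖(y : H)‖ = 1 := y.2
      have e1 : ∀ T : H →L[ℂ] H, |re ⟪T (y : H), (y : H)⟫_ℂ| ≤ ‖T‖ := fun T => by
        calc |re ⟪T (y : H), (y : H)⟫_ℂ| ≤ ‖⟪T (y : H), (y : H)⟫_ℂ‖ := abs_re_le_norm _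
          _ ≤ ‖T (y : H)‖ * ‖(y : H)‖ := norm_inner_le_norm _ _
          _ ≤ (‖T‖ * ‖(y : H)‖) * ‖(y : H)‖ := by
              gcongr
              exact T.le_opNorm _
          _ = ‖T‖ := by rw [hy]; ring
      have b1 := e1 B
      have habs : |re ⟪As (y : H), (y : H)⟫_ℂ * re ⟪C (y : H), (y : H)⟫_ℂ| ≤ ‖As‖ * ‖C‖ := by
        rw [abs_mul]
        exact mul_le_mul (e1 As) (e1 C) (abs_nonneg _) (norm_nonneg _)
      obtain ⟨hb1, hb2⟩ := abs_le.mp b1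
      obtain ⟨hc1, hc2⟩ := abs_le.mp habs
      linarith
    have hδx : re ⟪B x, x⟫_ℂ - s * re ⟪C x, x⟫_ℂ ≤ δ := by
      have h5 := le_ciSup hbdd (⟨x, hx⟩ : {y : H // ‖y‖ = 1})
      rw [hδ, hs_def]
      simpa using h5
    -- step 4 : f s ≤ ⟪f(As)x,x⟫
    have hfs : f s ≤ re ⟪(cfc f As) x, x⟫_ℂ := by
      have hop : cfc (fun t : ℝ => (f s - f' s * s) + f' s * t) As ≤ cfc f As := by
        refine cfc_mono (fun t ht => ?_)
          (continuousOn_const.add (continuousOn_const.mul continuousOn_id)) (hfc.mono hspecAs)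
        have h := rojw_tangent hf hf' hsJ (hspecAs ht)
        nlinarith
      have heq : cfc (fun t : ℝ => (f s - f' s * s) + f' s * t) As
          = (f s - f' s * s) • (1 : H →L[ℂ] H) + (f' s) • As := by
        have hcc : ContinuousOn (fun t : ℝ => f' s * t) (spectrum ℝ As) :=
          continuousOn_const.mul continuousOn_id
        rw [cfc_const_add (f s - f' s * s) (fun t : ℝ => f' s * t) As hcc hAsum,
          cfc_const_mul_id (f' s) As hAsum, Algebra.algebraMap_eq_smul_one]
      have h3 := rojw_inner_le (heq ▸ hop) x
      have h4 : (f s - f' s * s) * ‖x‖ ^ 2 + f' s * re ⟪As x, x⟫_ℂ ≤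
          re ⟪(cfc f As) x, x⟫_ℂ := by
        simpa only [ContinuousLinearMap.add_apply, ContinuousLinearMap.smul_apply,
          ContinuousLinearMap.one_apply, inner_add_left, map_add, rojw_re_smul_left,
          inner_self_eq_norm_sq] using h3
      rw [hx, ← hs_def] at h4
      nlinarith
    -- assemble
    have lhs_eq : re ⟪(∑ i, w i • cfc f (A i)) x, x⟫_ℂ
        = ∑ i, w i * re ⟪(cfc f (A i)) x, x⟫_ℂ := rojw_phi_sum w _ x
    have rhs_eq : re ⟪(cfc f As + δ • (1 : H →L[ℂ] H)) x, x⟫_ℂ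
        = re ⟪(cfc f As) x, x⟫_ℂ + δ := by
      rw [ContinuousLinearMap.add_apply, inner_add_left, map_add, rojw_phi_smul_one, hx]
      ring
    have hBx : re ⟪B x, x⟫_ℂ = ∑ i, w i * re ⟪(cfc f' (A i) * A i) x, x⟫_ℂ := by
      rw [hB_def, rojw_phi_sum]
    have hCx : re ⟪C x, x⟫_ℂ = ∑ i, w i * re ⟪(cfc f' (A i)) x, x⟫_ℂ := by
      rw [hC_def, rojw_phi_sum]
    rw [lhs_eq, rhs_eq]
    rw [hBx, hCx] at hδx
    linarith
  -- conclude via positivity of the difference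
  have hsa_d1 : IsSelfAdjoint (δ • (1 : H →L[ℂ] H)) := by
    rw [isSelfAdjoint_iff, star_smul, star_trivial, star_one]
  refine rojw_le_of_inner (hsa_sum _ (fun i => cfc_predicate f (A i)))
    ((cfc_predicate f As).add hsa_d1) ?_
  intro x
  rcases eq_or_ne x 0 with rfl | hx0
  · simp
  · have hnx : ‖x‖ ≠ 0 := norm_ne_zero_iff.mpr hx0
    set u : H := ‖x‖⁻¹ • x with hu_def
    have hu : ‖u‖ = 1 := by
      rw [hu_def, norm_smul, norm_inv, norm_norm, inv_mul_cancel₀ hnx]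
    have hxx : ‖x‖ • u = x := smul_inv_smul₀ hnx x
    have e1 := rojw_phi_scale (∑ i, w i • cfc f (A i)) ‖x‖ u
    have e2 := rojw_phi_scale (cfc f As + δ • (1 : H →L[ℂ] H)) ‖x‖ u
    rw [hxx] at e1 e2
    rw [e1, e2]
    exact mul_le_mul_of_nonneg_left (key u hu) (by positivity)
end

section
/- Let f : ℝ → ℝ be convex differentiable on J, A₁,…,Aₙ self-adjoint with spectra in J, and w₁,…,wₙ positive reals summing to 1. Write S = ∑ᵢ wᵢ Aᵢ and define ζ = sup over unit vectors x of (⟨f'(S)·S x, x⟩ − ⟨S x, x⟩·⟨f'(S) x, x⟩). Then f(∑ᵢ wᵢ Aᵢ) ≤ ∑ᵢ wᵢ f(Aᵢ) + ζ·1. -/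
open scoped InnerProductSpace
set_option maxHeartbeats 2000000
set_option synthInstance.maxHeartbeats 1000000

namespace OperatorJensenAux

open RCLike ContinuousLinearMap

variable {H : Type*} [NormedAddCommGroup H] [InnerProductSpace ℂ H] [CompleteSpace H]

set_option linter.unusedSectionVars false

lemma isSelfAdjoint_real_smul (w : ℝ) {T : H →L[ℂ] H} (hT : IsSelfAdjoint T) :
    IsSelfAdjoint (w • T) := by
  rw [isSelfAdjoint_iff, star_smul, star_trivial, hT.star_eq]

lemma re_inner_smul_real (r : ℝ) (x y : H) : re ⟪(r • x : H), y⟫_ℂ = r * re ⟪x, y⟫_ℂ := by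
  rw [real_smul_eq_coe_smul (K := ℂ) r x, inner_smul_real_left, smul_re]

lemma re_inner_smul_real_right (r : ℝ) (x y : H) :
    re ⟪x, (r • y : H)⟫_ℂ = r * re ⟪x, y⟫_ℂ := by
  rw [real_smul_eq_coe_smul (K := ℂ) r y, inner_smul_right]
  simp [mul_re]

lemma inner_mono {T T' : H →L[ℂ] H} (h : T ≤ T') (x : H) :
    re ⟪T x, x⟫_ℂ ≤ re ⟪T' x, x⟫_ℂ := by
  have h2 := ((ContinuousLinearMap.le_def T T').mp h).re_inner_nonneg_left x
  simp only [ContinuousLinearMap.sub_apply, inner_sub_left, map_sub] at h2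
  linarith

lemma smul_nonneg' (T : H →L[ℂ] H) (w : ℝ) (hw : 0 ≤ w) (h : 0 ≤ T) : 0 ≤ w • T := by
  rw [ContinuousLinearMap.le_def] at h ⊢
  rw [sub_zero] at h ⊢
  constructor
  · exact ContinuousLinearMap.isSelfAdjoint_iff_isSymmetric.mp (isSelfAdjoint_real_smul w h.1.isSelfAdjoint)
  · intro x
    have := h.2 x
    simp only [reApplyInnerSelf, ContinuousLinearMap.smul_apply] at *
    rw [re_inner_smul_real]
    exact mul_nonneg hw this

lemma smul_le_smul' {T T' : H →L[ℂ] H} (h : T ≤ T') {w : ℝ} (hw : 0 ≤ w) :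
    w • T ≤ w • T' := by
  rw [← sub_nonneg, ← smul_sub]
  exact smul_nonneg' (T' - T) w hw (sub_nonneg.2 h)

lemma tangent_le {f f' : ℝ → ℝ} {J : Set ℝ} (hf : ConvexOn ℝ J f)
    (hf' : ∀ t ∈ J, HasDerivAt f (f' t) t) {s t : ℝ} (hs : s ∈ J) (ht : t ∈ J) :
    f s + f' s * (t - s) ≤ f t := by
  rcases lt_trichotomy s t with h | rfl | h
  · have h1 := hf.le_slope_of_hasDerivAt hs ht h (hf' s hs)
    rw [slope_def_field] at h1
    have h2 : 0 < t - s := sub_pos.2 h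
    have := (le_div_iff₀ h2).mp h1
    linarith
  · simp
  · have h1 := hf.slope_le_of_hasDerivAt ht hs h (hf' s hs)
    rw [slope_def_field] at h1
    have h2 : 0 < s - t := sub_pos.2 h
    have := (div_le_iff₀ h2).mp h1
    nlinarith

lemma le_tangent {f f' : ℝ → ℝ} {J : Set ℝ} (hf : ConvexOn ℝ J f)
    (hf' : ∀ t ∈ J, HasDerivAt f (f' t) t) {s t : ℝ} (hs : s ∈ J) (ht : t ∈ J) :
    f t ≤ f s + f' t * (t - s) := by
  have := tangent_le hf hf' ht hs
  nlinarith

lemma spectrum_ge_of_le {T : H →L[ℂ] H} {r : ℝ}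
    (h : algebraMap ℝ (H →L[ℂ] H) r ≤ T) : ∀ μ ∈ spectrum ℝ T, r ≤ μ := by
  intro μ hμ
  have h0 : 0 ≤ T - algebraMap ℝ (H →L[ℂ] H) r := sub_nonneg.2 h
  have hmem : μ - r ∈ spectrum ℝ (T - algebraMap ℝ (H →L[ℂ] H) r) := by
    rw [← spectrum.sub_singleton_eq]
    exact Set.sub_mem_sub hμ rfl
  linarith [spectrum_nonneg_of_nonneg h0 hmem]

lemma spectrum_le_of_le {T : H →L[ℂ] H} {r : ℝ}
    (h : T ≤ algebraMap ℝ (H →L[ℂ] H) r) : ∀ μ ∈ spectrum ℝ T, μ ≤ r := by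
  intro μ hμ
  have h0 : 0 ≤ algebraMap ℝ (H →L[ℂ] H) r - T := sub_nonneg.2 h
  have hmem : r - μ ∈ spectrum ℝ (algebraMap ℝ (H →L[ℂ] H) r - T) := by
    rw [← spectrum.singleton_sub_eq]
    exact Set.sub_mem_sub rfl hμ
  linarith [spectrum_nonneg_of_nonneg h0 hmem]

lemma re_inner_algebraMap (r : ℝ) {x : H} (hx : ‖x‖ = 1) :
    re ⟪(algebraMap ℝ (H →L[ℂ] H) r) x, x⟫_ℂ = r := by
  rw [Algebra.algebraMap_eq_smul_one]
  simp only [ContinuousLinearMap.smul_apply, ContinuousLinearMap.one_apply]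
  rw [re_inner_smul_real]
  simp [inner_self_eq_norm_sq, hx]

lemma abs_re_inner_le_norm (T : H →L[ℂ] H) {x : H} (hx : ‖x‖ = 1) :
    |re ⟪T x, x⟫_ℂ| ≤ ‖T‖ := by
  have h1 : |re ⟪T x, x⟫_ℂ| ≤ ‖⟪T x, x⟫_ℂ‖ := abs_re_le_norm _
  have h2 : ‖⟪T x, x⟫_ℂ‖ ≤ ‖T x‖ * ‖x‖ := norm_inner_le_norm _ _
  have h3 : ‖T x‖ ≤ ‖T‖ * ‖x‖ := T.le_opNorm x
  rw [hx] at h2 h3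
  simpa using h1.trans (h2.trans (by simpa using h3))

section Nontrivial
variable [Nontrivial H]

instance : Nontrivial (H →L[ℂ] H) := by
  obtain ⟨x, hx⟩ := exists_ne (0 : H)
  refine ⟨0, 1, fun h => hx ?_⟩
  have := congrArg (fun T : H →L[ℂ] H => T x) h
  simpa using this.symm

lemma sInf_spectrum_mem {T : H →L[ℂ] H} (hT : IsSelfAdjoint T) :
    sInf (spectrum ℝ T) ∈ spectrum ℝ T :=
  (spectrum.isCompact (𝕜 := ℝ) T).sInf_mem hT.spectrum_nonempty

lemma sSup_spectrum_mem {T : H →L[ℂ] H} (hT : IsSelfAdjoint T) :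
    sSup (spectrum ℝ T) ∈ spectrum ℝ T :=
  (spectrum.isCompact (𝕜 := ℝ) T).sSup_mem hT.spectrum_nonempty

lemma numerical_range_mem {T : H →L[ℂ] H} (hT : IsSelfAdjoint T) {x : H} (hx : ‖x‖ = 1) :
    re ⟪T x, x⟫_ℂ ∈ Set.Icc (sInf (spectrum ℝ T)) (sSup (spectrum ℝ T)) := by
  have hbb := (spectrum.isCompact (𝕜 := ℝ) T).bddBelow
  have hba := (spectrum.isCompact (𝕜 := ℝ) T).bddAbove
  have h1 : algebraMap ℝ (H →L[ℂ] H) (sInf (spectrum ℝ T)) ≤ T :=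
    algebraMap_le_of_le_spectrum (fun μ hμ => csInf_le hbb hμ) hT
  have h2 : T ≤ algebraMap ℝ (H →L[ℂ] H) (sSup (spectrum ℝ T)) :=
    le_algebraMap_of_spectrum_le (fun μ hμ => le_csSup hba hμ) hT
  have p1 := inner_mono h1 x
  have p2 := inner_mono h2 x
  rw [re_inner_algebraMap _ hx] at p1 p2
  exact ⟨p1, p2⟩

end Nontrivial

end OperatorJensenAux

set_option maxHeartbeats 2000000 in
open OperatorJensenAux RCLike ContinuousLinearMap in
/-- Scalar-weight operator Jensen-type inequality without operator convexity. -/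
theorem operator_jensen_weights {H : Type*}
    [NormedAddCommGroup H] [InnerProductSpace ℂ H] [CompleteSpace H]
    (f f' : ℝ → ℝ) (J : Set ℝ) (hf : ConvexOn ℝ J f)
    (hf' : ∀ t ∈ J, HasDerivAt f (f' t) t) (hf'c : ContinuousOn f' J)
    (n : ℕ) (A : Fin n → H →L[ℂ] H) (w : Fin n → ℝ)
    (hA : ∀ i, IsSelfAdjoint (A i)) (hspec : ∀ i, spectrum ℝ (A i) ⊆ J)
    (hw : ∀ i, 0 < w i) (hw1 : ∑ i, w i = 1)
    (S : H →L[ℂ] H) (hS : S = ∑ i, w i • A i)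
    (ζ : ℝ)
    (hζ : ζ = ⨆ x : {x : H // ‖x‖ = 1},
      (RCLike.re ⟪(cfc f' S * S) (x : H), (x : H)⟫_ℂ
        - RCLike.re ⟪S (x : H), (x : H)⟫_ℂ
          * RCLike.re ⟪cfc f' S (x : H), (x : H)⟫_ℂ)) :
    cfc f (∑ i, w i • A i) ≤ ∑ i, w i • cfc f (A i) + ζ • (1 : H →L[ℂ] H) := by
  rw [← hS]
  rcases subsingleton_or_nontrivial H with hH | hH
  · have : Subsingleton (H →L[ℂ] H) :=
      ⟨fun a b => ContinuousLinearMap.ext fun x => Subsingleton.elim _ _⟩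
    exact le_of_eq (Subsingleton.elim _ _)
  have hJc : Convex ℝ J := hf.1
  have hfc : ContinuousOn f J := fun t ht => ((hf' t ht).continuousAt).continuousWithinAt
  -- self-adjointness
  have hSsa : IsSelfAdjoint S := by
    rw [hS, isSelfAdjoint_iff, star_sum]
    exact Finset.sum_congr rfl fun i _ => isSelfAdjoint_real_smul (w i) (hA i)
  -- spectrum of S is contained in J
  have hmJ : ∀ i, sInf (spectrum ℝ (A i)) ∈ J := fun i => hspec i (sInf_spectrum_mem (hA i))
  have hMJ : ∀ i, sSup (spectrum ℝ (A i)) ∈ J := fun i => hspec i (sSup_spectrum_mem (hA i))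
  have hbbA : ∀ i, BddBelow (spectrum ℝ (A i)) := fun i => (spectrum.isCompact (𝕜 := ℝ) (A i)).bddBelow
  have hbaA : ∀ i, BddAbove (spectrum ℝ (A i)) := fun i => (spectrum.isCompact (𝕜 := ℝ) (A i)).bddAbove
  have hlow : algebraMap ℝ (H →L[ℂ] H) (∑ i, w i * sInf (spectrum ℝ (A i))) ≤ S := by
    rw [map_sum, hS]
    refine Finset.sum_le_sum fun i _ => ?_
    have h1 : algebraMap ℝ (H →L[ℂ] H) (sInf (spectrum ℝ (A i))) ≤ A i :=
      algebraMap_le_of_le_spectrum (fun μ hμ => csInf_le (hbbA i) hμ) (hA i)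
    have := smul_le_smul' h1 (hw i).le
    rwa [Algebra.algebraMap_eq_smul_one (A := H →L[ℂ] H), smul_smul,
      ← Algebra.algebraMap_eq_smul_one (A := H →L[ℂ] H)] at this
  have hup : S ≤ algebraMap ℝ (H →L[ℂ] H) (∑ i, w i * sSup (spectrum ℝ (A i))) := by
    rw [map_sum, hS]
    refine Finset.sum_le_sum fun i _ => ?_
    have h1 : A i ≤ algebraMap ℝ (H →L[ℂ] H) (sSup (spectrum ℝ (A i))) :=
      le_algebraMap_of_spectrum_le (fun μ hμ => le_csSup (hbaA i) hμ) (hA i)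
    have := smul_le_smul' h1 (hw i).le
    rwa [Algebra.algebraMap_eq_smul_one (A := H →L[ℂ] H), smul_smul,
      ← Algebra.algebraMap_eq_smul_one (A := H →L[ℂ] H)] at this
  have hmem_sum : ∀ g : Fin n → ℝ, (∀ i, g i ∈ J) → (∑ i, w i * g i) ∈ J := by
    intro g hg
    have := hJc.sum_mem (t := Finset.univ) (fun i _ => (hw i).le) hw1 (fun i _ => hg i)
    simpa [smul_eq_mul] using this
  have hSspec : spectrum ℝ S ⊆ J := by
    intro μ hμ
    have h1 := spectrum_ge_of_le hlow μ hμ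
    have h2 := spectrum_le_of_le hup μ hμ
    exact hJc.ordConnected.out (hmem_sum _ hmJ) (hmem_sum _ hMJ) ⟨h1, h2⟩
  have hf'cS : ContinuousOn f' (spectrum ℝ S) := hf'c.mono hSspec
  have hfcS : ContinuousOn f (spectrum ℝ S) := hfc.mono hSspec
  -- ζ is an upper bound for the bracket at unit vectors
  have hbdd : BddAbove (Set.range fun x : {x : H // ‖x‖ = 1} =>
      (re ⟪(cfc f' S * S) (x : H), (x : H)⟫_ℂ
        - re ⟪S (x : H), (x : H)⟫_ℂ * re ⟪cfc f' S (x : H), (x : H)⟫_ℂ)) := by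
    refine ⟨‖cfc f' S * S‖ + ‖S‖ * ‖cfc f' S‖, ?_⟩
    rintro r ⟨⟨x, hx⟩, rfl⟩
    have b1 := abs_re_inner_le_norm (cfc f' S * S) hx
    have b2 := abs_re_inner_le_norm S hx
    have b3 := abs_re_inner_le_norm (cfc f' S) hx
    have := abs_mul (re ⟪S x, x⟫_ℂ) (re ⟪cfc f' S x, x⟫_ℂ)
    have hb : |re ⟪S x, x⟫_ℂ * re ⟪cfc f' S x, x⟫_ℂ| ≤ ‖S‖ * ‖cfc f' S‖ := by
      rw [this]
      exact mul_le_mul (le_of_abs_le b1 |>.trans le_rfl |> fun _ => b2) b3 (abs_nonneg _)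
        (le_trans (abs_nonneg _) b2) |>.trans le_rfl
    have := abs_le.mp hb
    have := abs_le.mp b1
    dsimp only
    linarith [ (abs_le.mp hb).1, (abs_le.mp hb).2, (abs_le.mp b1).1, (abs_le.mp b1).2 ]
  -- key inequality at unit vectors
  have key : ∀ x : H, ‖x‖ = 1 →
      re ⟪cfc f S x, x⟫_ℂ ≤ re ⟪(∑ i, w i • cfc f (A i)) x, x⟫_ℂ + ζ := by
    intro x hx
    set s : ℝ := re ⟪S x, x⟫_ℂ with hs_def
    have hsJ : s ∈ J := by
      have hmemI := numerical_range_mem hSsa hx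
      exact hJc.ordConnected.out (hSspec (sInf_spectrum_mem hSsa))
        (hSspec (sSup_spectrum_mem hSsa)) hmemI
    -- inequality (2) : cfc f S ≤ f(s) + f'(S) S - s f'(S)
    have ineq2 : cfc f S ≤ algebraMap ℝ (H →L[ℂ] H) (f s) + (cfc f' S * S - s • cfc f' S) := by
      have hcont : ContinuousOn (fun t => f s + (f' t * t - s * f' t)) (spectrum ℝ S) := by
        fun_prop (disch := exact hf'cS)
      have hmono : cfc f S ≤ cfc (fun t => f s + (f' t * t - s * f' t)) S := by
        refine cfc_mono (fun t ht => ?_) hfcS hcont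
        have := le_tangent hf hf' hsJ (hSspec ht)
        nlinarith
      refine hmono.trans (le_of_eq ?_)
      rw [cfc_add (a := S) (f := fun _ => f s) (g := fun t => f' t * t - s * f' t)
          (by fun_prop) (by fun_prop (disch := exact hf'cS)),
        cfc_const (f s) S hSsa,
        cfc_sub (f := fun t => f' t * t) (g := fun t => s * f' t) (a := S)
          (by fun_prop (disch := exact hf'cS)) (by fun_prop (disch := exact hf'cS)),
        cfc_mul (fun t => f' t) (fun t => t) S hf'cS (by fun_prop),
        cfc_id' ℝ S hSsa, cfc_const_mul s f' S hf'cS]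
    have pair2 : re ⟪cfc f S x, x⟫_ℂ ≤ f s + (re ⟪(cfc f' S * S) x, x⟫_ℂ - s * re ⟪cfc f' S x, x⟫_ℂ) := by
      have := inner_mono ineq2 x
      simp only [ContinuousLinearMap.add_apply, ContinuousLinearMap.sub_apply,
        ContinuousLinearMap.smul_apply, inner_add_left, inner_sub_left, map_add, map_sub] at this
      rw [re_inner_algebraMap _ hx, re_inner_smul_real] at this
      linarith
    -- bracket ≤ ζ
    have hbr : re ⟪(cfc f' S * S) x, x⟫_ℂ - s * re ⟪cfc f' S x, x⟫_ℂ ≤ ζ := by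
      rw [hζ]
      exact le_ciSup hbdd ⟨x, hx⟩
    -- inequality (1) : tangent line under each cfc f (A i)
    have pair1 : ∀ i, (f s - f' s * s) + f' s * re ⟪A i x, x⟫_ℂ ≤ re ⟪cfc f (A i) x, x⟫_ℂ := by
      intro i
      have hmono : cfc (fun t => (f s - f' s * s) + f' s * t) (A i) ≤ cfc f (A i) := by
        refine cfc_mono (fun t ht => ?_) (by fun_prop) (hfc.mono (hspec i))
        have := tangent_le hf hf' hsJ (hspec i ht)
        nlinarith
      have heq : cfc (fun t => (f s - f' s * s) + f' s * t) (A i)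
          = algebraMap ℝ (H →L[ℂ] H) (f s - f' s * s) + f' s • A i := by
        rw [cfc_add (a := A i) (f := fun _ => f s - f' s * s) (g := fun t => f' s * t)
          (by fun_prop) (by fun_prop), cfc_const (f s - f' s * s) (A i) (hA i),
          cfc_const_mul (f' s) (fun t => t) (A i) (by fun_prop), cfc_id' ℝ (A i) (hA i)]
      have := inner_mono (heq ▸ hmono) x
      simp only [ContinuousLinearMap.add_apply, ContinuousLinearMap.smul_apply,
        inner_add_left, map_add] at this
      rw [re_inner_algebraMap _ hx, re_inner_smul_real] at this
      linarith
    -- sum of A i pairings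
    have hsum : ∑ i, w i * re ⟪A i x, x⟫_ℂ = s := by
      rw [hs_def, hS]
      rw [ContinuousLinearMap.sum_apply, sum_inner, map_sum]
      refine Finset.sum_congr rfl fun i _ => ?_
      rw [ContinuousLinearMap.smul_apply, re_inner_smul_real]
    have hsumf : re ⟪(∑ i, w i • cfc f (A i)) x, x⟫_ℂ = ∑ i, w i * re ⟪cfc f (A i) x, x⟫_ℂ := by
      rw [ContinuousLinearMap.sum_apply, sum_inner, map_sum]
      refine Finset.sum_congr rfl fun i _ => ?_
      rw [ContinuousLinearMap.smul_apply, re_inner_smul_real]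
    have step1 : f s ≤ ∑ i, w i * re ⟪cfc f (A i) x, x⟫_ℂ := by
      have h1 : ∑ i, w i * ((f s - f' s * s) + f' s * re ⟪A i x, x⟫_ℂ)
          ≤ ∑ i, w i * re ⟪cfc f (A i) x, x⟫_ℂ :=
        Finset.sum_le_sum fun i _ => mul_le_mul_of_nonneg_left (pair1 i) (hw i).le
      have h2 : ∑ i, w i * ((f s - f' s * s) + f' s * re ⟪A i x, x⟫_ℂ)
          = (f s - f' s * s) * (∑ i, w i) + f' s * (∑ i, w i * re ⟪A i x, x⟫_ℂ) := by
        rw [Finset.mul_sum, Finset.mul_sum, ← Finset.sum_add_distrib]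
        exact Finset.sum_congr rfl fun i _ => by ring
      rw [h2, hw1, hsum] at h1
      calc f s = (f s - f' s * s) * 1 + f' s * s := by ring
        _ ≤ _ := h1
    rw [hsumf]
    linarith
  -- conclude via positivity of the difference
  rw [ContinuousLinearMap.le_def]
  have hsaRHS : IsSelfAdjoint (∑ i, w i • cfc f (A i) + ζ • (1 : H →L[ℂ] H)) := by
    refine IsSelfAdjoint.add ?_ (isSelfAdjoint_real_smul ζ (by rw [isSelfAdjoint_iff, star_one]))
    rw [isSelfAdjoint_iff, star_sum]
    exact Finset.sum_congr rfl fun i _ =>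
      (isSelfAdjoint_real_smul (w i) (cfc_predicate f (A i)))
  constructor
  · exact ContinuousLinearMap.isSelfAdjoint_iff_isSymmetric.mp (hsaRHS.sub (cfc_predicate f S))
  · intro x
    rw [reApplyInnerSelf]
    simp only [ContinuousLinearMap.sub_apply, inner_sub_left, map_sub, sub_nonneg]
    rcases eq_or_ne x 0 with rfl | hx0
    · simp
    · set u : H := (‖x‖⁻¹ : ℝ) • x with hu_def
      have hx0' : ‖x‖ ≠ 0 := norm_ne_zero_iff.2 hx0
      have hu : ‖u‖ = 1 := by
        rw [hu_def, norm_smul, Real.norm_eq_abs, abs_inv, abs_of_nonneg (norm_nonneg x),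
          inv_mul_cancel₀ hx0']
      have hxu : x = (‖x‖ : ℝ) • u := by
        rw [hu_def, smul_smul, mul_inv_cancel₀ hx0', one_smul]
      have hk := key u hu
      have hζ1 : re ⟪(ζ • (1 : H →L[ℂ] H)) u, u⟫_ℂ = ζ := by
        rw [ContinuousLinearMap.smul_apply, ContinuousLinearMap.one_apply, re_inner_smul_real]
        simp [inner_self_eq_norm_sq, hu]
      have hRHSu : re ⟪cfc f S u, u⟫_ℂ
          ≤ re ⟪(∑ i, w i • cfc f (A i) + ζ • (1 : H →L[ℂ] H)) u, u⟫_ℂ := by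
        rw [ContinuousLinearMap.add_apply, inner_add_left, map_add, hζ1]
        exact hk
      have scale : ∀ T : H →L[ℂ] H, re ⟪T x, x⟫_ℂ = ‖x‖ ^ 2 * re ⟪T u, u⟫_ℂ := by
        intro T
        conv_lhs => rw [hxu]
        rw [T.map_smul_of_tower, re_inner_smul_real, re_inner_smul_real_right]
        ring
      rw [scale, scale]
      have := mul_le_mul_of_nonneg_left hRHSu (sq_nonneg ‖x‖)
      linarith
end

section
/- Let Ψ : B(H) → B(K) be a unital positive linear map and T ∈ B(H) self-adjoint. Define δ = sup over unit vectors x ∈ K of (⟨Ψ(T²) x, x⟩ − ⟨Ψ(T) x, x⟩²). Then Ψ(T²) ≤ Ψ(T)² + 2δ·1_K. -/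
open scoped InnerProductSpace
open RCLike ContinuousLinearMap

section aux
variable {K : Type*} [NormedAddCommGroup K] [InnerProductSpace ℂ K] [CompleteSpace K]

lemma sq_inner_re' (A : K →L[ℂ] K) (hA : IsSelfAdjoint A) (x : K) :
    RCLike.re ⟪(A ^ 2) x, x⟫_ℂ = ‖A x‖ ^ 2 := by
  have h1 : (A ^ 2) x = A (A x) := by rw [pow_two, ContinuousLinearMap.mul_apply]
  rw [h1]
  nth_rewrite 1 [← hA.adjoint_eq]
  rw [ContinuousLinearMap.adjoint_inner_left]
  exact inner_self_eq_norm_sq (𝕜 := ℂ) (A x)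

omit [CompleteSpace K] in
lemma scale_inner_re (C : K →L[ℂ] K) (r : ℝ) (u : K) :
    RCLike.re ⟪C (r • u), r • u⟫_ℂ = r ^ 2 * RCLike.re ⟪C u, u⟫_ℂ := by
  rw [real_smul_eq_coe_smul (K := ℂ), map_smul, inner_smul_left, inner_smul_right,
    RCLike.conj_ofReal, ← mul_assoc, ← RCLike.ofReal_mul, re_ofReal_mul]
  ring_nf

set_option maxHeartbeats 1000000 in
lemma smul_one_sa (c : ℂ) (hc : (starRingEnd ℂ) c = c) :
    IsSelfAdjoint (c • (1 : K →L[ℂ] K)) := by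
  rw [IsSelfAdjoint, star_smul, star_one]
  exact congrArg (· • (1 : K →L[ℂ] K)) hc

lemma sq_isPositive (A : K →L[ℂ] K) (hA : IsSelfAdjoint A) : (A ^ 2).IsPositive := by
  refine ⟨ContinuousLinearMap.isSelfAdjoint_iff_isSymmetric.mp (hA.pow 2), fun x => ?_⟩
  rw [reApplyInnerSelf, sq_inner_re' A hA x]
  positivity

lemma shift_isPositive (A : K →L[ℂ] K) (hA : IsSelfAdjoint A) :
    (A + (‖A‖ : ℂ) • 1).IsPositive := by
  refine ⟨ContinuousLinearMap.isSelfAdjoint_iff_isSymmetric.mp (hA.add (smul_one_sa _ (Complex.conj_ofReal _))), fun x => ?_⟩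
  rw [reApplyInnerSelf, add_apply, smul_apply, ContinuousLinearMap.one_apply, inner_add_left, inner_smul_left,
    Complex.conj_ofReal, map_add]
  have h2 : RCLike.re ((‖A‖ : ℂ) * ⟪x, x⟫_ℂ) = ‖A‖ * ‖x‖ ^ 2 := by
    rw [inner_self_eq_norm_sq_to_K]
    norm_cast
    simp [← Complex.ofReal_pow]
  rw [h2]
  have h1 : |RCLike.re ⟪A x, x⟫_ℂ| ≤ ‖A‖ * ‖x‖ ^ 2 := by
    refine (abs_re_le_norm _).trans ((norm_inner_le_norm _ _).trans ?_)
    rw [pow_two, ← mul_assoc]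
    exact mul_le_mul_of_nonneg_right (A.le_opNorm x) (norm_nonneg x)
  nlinarith [abs_le.mp h1]

end aux

/-- Reverse Kadison–Schwarz inequality for self-adjoint `T`. -/
theorem reverse_kadison_schwarz {H K : Type*}
    [NormedAddCommGroup H] [InnerProductSpace ℂ H] [CompleteSpace H]
    [NormedAddCommGroup K] [InnerProductSpace ℂ K] [CompleteSpace K]
    (Ψ : (H →L[ℂ] H) →ₗ[ℂ] (K →L[ℂ] K))
    (hΨpos : ∀ T : H →L[ℂ] H, T.IsPositive → (Ψ T).IsPositive)
    (hΨ1 : Ψ 1 = 1)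
    (T : H →L[ℂ] H) (hT : IsSelfAdjoint T)
    (δ : ℝ)
    (hδ : δ = ⨆ x : {x : K // ‖x‖ = 1},
      (RCLike.re ⟪Ψ (T ^ 2) (x : K), (x : K)⟫_ℂ
        - (RCLike.re ⟪Ψ T (x : K), (x : K)⟫_ℂ) ^ 2)) :
    Ψ (T ^ 2) ≤ Ψ T ^ 2 + (2 * δ) • (1 : K →L[ℂ] K) := by
  set A := Ψ T with hAdef
  set B := Ψ (T ^ 2) with hBdef
  have hBpos : B.IsPositive := hΨpos _ (sq_isPositive T hT)
  have hAsa : IsSelfAdjoint A := by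
    have h1 : (Ψ (T + (‖T‖ : ℂ) • 1)).IsPositive := hΨpos _ (shift_isPositive T hT)
    have h2 : Ψ (T + (‖T‖ : ℂ) • 1) = A + (‖T‖ : ℂ) • 1 := by
      rw [map_add, map_smul, hΨ1]
    rw [h2] at h1
    have := h1.isSelfAdjoint.sub (smul_one_sa (K := K) _ (Complex.conj_ofReal ‖T‖))
    simpa using this
  -- pointwise Kadison–Schwarz
  have hKS : ∀ u : K, ‖u‖ = 1 →
      (RCLike.re ⟪A u, u⟫_ℂ) ^ 2 ≤ RCLike.re ⟪B u, u⟫_ℂ := by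
    intro u hu
    set l : ℝ := RCLike.re ⟪A u, u⟫_ℂ with hl
    set c : ℂ := (l : ℂ) with hc
    have hcc : (starRingEnd ℂ) c = c := Complex.conj_ofReal l
    have hexp : (T - c • 1) ^ 2 = T ^ 2 - (2 * c) • T + (c ^ 2) • 1 := by
      simp only [pow_two, mul_sub, sub_mul, smul_mul_assoc, mul_smul_comm, one_mul, mul_one,
        smul_smul]
      module
    have hpos : (Ψ ((T - c • 1) ^ 2)).IsPositive :=
      hΨpos _ (sq_isPositive _ (hT.sub (smul_one_sa _ hcc)))
    rw [hexp] at hpos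
    have h3 : Ψ (T ^ 2 - (2 * c) • T + (c ^ 2) • 1) = B - (2 * c) • A + (c ^ 2) • 1 := by
      rw [map_add, map_sub, map_smul, map_smul, hΨ1]
    rw [h3] at hpos
    have h4 := hpos.re_inner_nonneg_left u
    have huu : ⟪u, u⟫_ℂ = 1 := by
      rw [inner_self_eq_norm_sq_to_K, hu]; norm_num
    have hAuu : ⟪A u, u⟫_ℂ = c := by
      have hsym : (starRingEnd ℂ) ⟪A u, u⟫_ℂ = ⟪A u, u⟫_ℂ := by
        rw [inner_conj_symm]
        nth_rewrite 1 [← hAsa.adjoint_eq]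
        rw [ContinuousLinearMap.adjoint_inner_right]
      rw [hc, ← RCLike.conj_eq_iff_re.mp hsym, hl]
      norm_num
    rw [add_apply, sub_apply, smul_apply, smul_apply, ContinuousLinearMap.one_apply, inner_add_left, inner_sub_left,
      inner_smul_left, inner_smul_left, hAuu, huu, mul_one, map_mul, map_pow, hcc,
      map_ofNat] at h4
    have : RCLike.re (⟪B u, u⟫_ℂ - 2 * c * c + c ^ 2) = RCLike.re ⟪B u, u⟫_ℂ - l ^ 2 := by
      rw [map_add, map_sub, hc, ← Complex.ofReal_ofNat, ← Complex.ofReal_mul,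
        ← Complex.ofReal_mul, ← Complex.ofReal_pow]
      simp [← Complex.ofReal_pow]
      ring
    rw [this] at h4
    linarith
  -- boundedness
  have hbdd : BddAbove (Set.range fun x : {x : K // ‖x‖ = 1} =>
      (RCLike.re ⟪B (x : K), (x : K)⟫_ℂ - (RCLike.re ⟪A (x : K), (x : K)⟫_ℂ) ^ 2)) := by
    refine ⟨‖B‖, fun r hr => ?_⟩
    obtain ⟨⟨u, hu⟩, rfl⟩ := hr
    dsimp only
    have h1 : RCLike.re ⟪B u, u⟫_ℂ ≤ ‖B‖ := by
      refine (abs_le.mp (abs_re_le_norm _)).2.trans ((norm_inner_le_norm _ _).trans ?_)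
      calc ‖B u‖ * ‖u‖ ≤ ‖B‖ * ‖u‖ * ‖u‖ :=
            mul_le_mul_of_nonneg_right (B.le_opNorm u) (norm_nonneg u)
        _ = ‖B‖ := by rw [hu]; ring
    nlinarith [sq_nonneg (RCLike.re ⟪A u, u⟫_ℂ)]
  have hle : ∀ u : K, ‖u‖ = 1 →
      RCLike.re ⟪B u, u⟫_ℂ - (RCLike.re ⟪A u, u⟫_ℂ) ^ 2 ≤ δ := by
    intro u hu
    rw [hδ]
    exact le_ciSup hbdd ⟨u, hu⟩
  -- main inequality
  rw [ContinuousLinearMap.le_def]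
  have hsa2 : IsSelfAdjoint ((2 * δ) • (1 : K →L[ℂ] K)) := by
    have : ((2 * δ : ℝ) : ℂ) • (1 : K →L[ℂ] K) = (2 * δ) • (1 : K →L[ℂ] K) := by
      simp [real_smul_eq_coe_smul (K := ℂ)]
    rw [← this]
    exact smul_one_sa _ (Complex.conj_ofReal _)
  refine ⟨ContinuousLinearMap.isSelfAdjoint_iff_isSymmetric.mp (((hAsa.pow 2).add hsa2).sub hBpos.isSelfAdjoint), fun x => ?_⟩
  rw [reApplyInnerSelf]
  rcases eq_or_ne x 0 with hx | hx
  · simp [hx]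
  · set u : K := ‖x‖⁻¹ • x with hudef
    have hu : ‖u‖ = 1 := by
      rw [hudef, norm_smul, norm_inv, norm_norm, inv_mul_cancel₀ (norm_ne_zero_iff.mpr hx)]
    have hδ0 : 0 ≤ δ := le_trans (by nlinarith [hKS u hu]) (hle u hu)
    have hunit : RCLike.re ⟪B u, u⟫_ℂ ≤ RCLike.re ⟪(A ^ 2) u, u⟫_ℂ + 2 * δ := by
      have h1 : (RCLike.re ⟪A u, u⟫_ℂ) ^ 2 ≤ ‖A u‖ ^ 2 := by
        have h2 := (abs_re_le_norm ⟪A u, u⟫_ℂ).trans ((norm_inner_le_norm _ _).trans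
          (by rw [hu, mul_one] : ‖A u‖ * ‖u‖ ≤ ‖A u‖))
        nlinarith [abs_nonneg (RCLike.re ⟪A u, u⟫_ℂ), sq_abs (RCLike.re ⟪A u, u⟫_ℂ),
          norm_nonneg (A u)]
      rw [sq_inner_re' A hAsa u]
      nlinarith [hle u hu]
    have hxu : x = (‖x‖ : ℝ) • u := by
      rw [hudef, smul_smul, mul_inv_cancel₀ (norm_ne_zero_iff.mpr hx), one_smul]
    have hsB : RCLike.re ⟪B x, x⟫_ℂ = ‖x‖ ^ 2 * RCLike.re ⟪B u, u⟫_ℂ := by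
      nth_rewrite 1 [hxu]; nth_rewrite 2 [hxu]
      rw [scale_inner_re]
    have hsA : RCLike.re ⟪(A ^ 2) x, x⟫_ℂ = ‖x‖ ^ 2 * RCLike.re ⟪(A ^ 2) u, u⟫_ℂ := by
      nth_rewrite 1 [hxu]; nth_rewrite 2 [hxu]
      rw [scale_inner_re]
    have h2δ : RCLike.re ⟪((2 * δ) • (1 : K →L[ℂ] K)) x, x⟫_ℂ = 2 * δ * ‖x‖ ^ 2 := by
      rw [smul_apply, ContinuousLinearMap.one_apply, real_smul_eq_coe_smul (K := ℂ), inner_smul_left,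
        RCLike.conj_ofReal, re_ofReal_mul, inner_self_eq_norm_sq (𝕜 := ℂ)]
    rw [sub_apply, add_apply, inner_sub_left, inner_add_left, map_sub, map_add, hsB, hsA, h2δ]
    nlinarith [sq_nonneg ‖x‖]
end

section
/- Let A, B be positive invertible operators on H and Φ : B(H) → B(K) a unital positive linear map. Define δ = sup over unit vectors x ∈ K of (⟨Φ(A+B)^{-1/2} Φ(A(A+B)^{-1}A) Φ(A+B)^{-1/2} x, x⟩ − ⟨Φ(A+B)^{-1/2} Φ(A) Φ(A+B)^{-1/2} x, x⟩²). Then Φ(A) : Φ(B) ≤ Φ(A : B) + 2δ·Φ(A+B), where X : Y = (X^{-1} + Y^{-1})^{-1} denotes the parallel sum. -/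
open scoped InnerProductSpace

section Aux

variable {E : Type*} [NormedAddCommGroup E] [InnerProductSpace ℂ E] [CompleteSpace E]

lemma aux_spec_pos {a : E →L[ℂ] E} (ha : 0 ≤ a) (hu : IsUnit a) :
    ∀ t ∈ spectrum ℝ a, 0 < t := by
  intro t ht
  rcases (spectrum_nonneg_of_nonneg ha ht).lt_or_eq with h | h
  · exact h
  · exact absurd (h ▸ ht) (spectrum.zero_notMem ℝ hu)

lemma aux_cont {a : E →L[ℂ] E} (hpos : ∀ t ∈ spectrum ℝ a, 0 < t) (c : ℝ) :
    ContinuousOn (fun t : ℝ => t ^ c) (spectrum ℝ a) := fun t ht =>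
  (Real.continuousAt_rpow_const t c (Or.inl (hpos t ht).ne')).continuousWithinAt

lemma aux_rpow_mul {a : E →L[ℂ] E} (ha : 0 ≤ a) (hu : IsUnit a) (p q : ℝ) :
    cfc (fun t : ℝ => t ^ p) a * cfc (fun t : ℝ => t ^ q) a
      = cfc (fun t : ℝ => t ^ (p + q)) a := by
  have hpos := aux_spec_pos ha hu
  rw [← cfc_mul _ _ a (aux_cont hpos p) (aux_cont hpos q)]
  exact cfc_congr fun t ht => (Real.rpow_add (hpos t ht) p q).symm

lemma aux_rpow_one {a : E →L[ℂ] E} (ha : 0 ≤ a) :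
    cfc (fun t : ℝ => t ^ (1 : ℝ)) a = a := by
  have h1 : cfc (fun t : ℝ => t ^ (1 : ℝ)) a = cfc (id : ℝ → ℝ) a :=
    cfc_congr fun t _ => Real.rpow_one t
  rw [h1, cfc_id ℝ a (IsSelfAdjoint.of_nonneg ha)]

lemma aux_rpow_zero {a : E →L[ℂ] E} (ha : 0 ≤ a) :
    cfc (fun t : ℝ => t ^ (0 : ℝ)) a = 1 := by
  have h1 : cfc (fun t : ℝ => t ^ (0 : ℝ)) a = cfc (fun _ : ℝ => (1 : ℝ)) a :=
    cfc_congr fun t _ => Real.rpow_zero t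
  rw [h1, cfc_const_one ℝ a (IsSelfAdjoint.of_nonneg ha)]

lemma aux_rpow_neg_one {a : E →L[ℂ] E} (ha : 0 ≤ a) (hu : IsUnit a) :
    cfc (fun t : ℝ => t ^ (-1 : ℝ)) a = Ring.inverse a := by
  have h1 : cfc (fun t : ℝ => t ^ (-1 : ℝ)) a = cfc (fun t : ℝ => t⁻¹) a :=
    cfc_congr fun t _ => Real.rpow_neg_one t
  have h2 : IsSelfAdjoint ((hu.unit : E →L[ℂ] E)) := by
    rw [hu.unit_spec]; exact IsSelfAdjoint.of_nonneg ha
  rw [h1, ← hu.unit_spec, cfc_inv_id (R := ℝ) hu.unit h2, Ring.inverse_unit]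

/-- Parallel sum formula. -/
lemma aux_parallel {M : Type*} [Ring M] {X Y : M} (hX : IsUnit X) (hY : IsUnit Y)
    (hs : IsUnit (X + Y)) :
    Ring.inverse (Ring.inverse X + Ring.inverse Y)
      = X - X * Ring.inverse (X + Y) * X := by
  obtain ⟨u, hu⟩ := hX
  obtain ⟨v, hv⟩ := hY
  obtain ⟨w, hw⟩ := hs
  subst hu
  subst hv
  have h1 : Ring.inverse ((u : M)) + Ring.inverse ((v : M)) = ((u⁻¹ * w * v⁻¹ : Mˣ) : M) := by
    rw [Ring.inverse_unit, Ring.inverse_unit]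
    have h2 : ((u⁻¹ * w * v⁻¹ : Mˣ) : M) = ↑u⁻¹ * ((u : M) + (v : M)) * ↑v⁻¹ := by
      rw [Units.val_mul, Units.val_mul, hw]
    rw [h2, mul_add, add_mul, Units.inv_mul, one_mul, mul_assoc, Units.mul_inv, mul_one,
      add_comm]
  rw [h1, Ring.inverse_unit, mul_inv_rev, mul_inv_rev, inv_inv, inv_inv, ← hw,
    Ring.inverse_unit]
  have hv' : ((v : M)) = (w : M) - (u : M) := by rw [hw]; abel
  rw [Units.val_mul, Units.val_mul, hv', sub_mul, ← mul_assoc ((w : M)), Units.mul_inv,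
    one_mul, ← mul_assoc]

lemma aux_op_le {F : Type*} [NormedAddCommGroup F] [InnerProductSpace ℂ F] [CompleteSpace F]
    {X : F →L[ℂ] F} (hX : IsSelfAdjoint X)
    (h : ∀ u : F, ‖u‖ = 1 → 0 ≤ RCLike.re ⟪X u, u⟫_ℂ) : 0 ≤ X := by
  rw [ContinuousLinearMap.nonneg_iff_isPositive]
  refine ⟨ContinuousLinearMap.isSelfAdjoint_iff_isSymmetric.mp hX, fun x => ?_⟩
  rw [ContinuousLinearMap.reApplyInnerSelf_apply]
  by_cases hx : x = 0
  · simp [hx]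
  · have hn : ‖x‖ ≠ 0 := norm_ne_zero_iff.mpr hx
    have hu : ‖((‖x‖⁻¹ : ℝ) • x : F)‖ = 1 := by
      rw [norm_smul]; simp [hn]
    have hkey := h _ hu
    have hXapp : X ((‖x‖⁻¹ : ℝ) • x) = (‖x‖⁻¹ : ℝ) • X x := by
      rw [RCLike.real_smul_eq_coe_smul (K := ℂ), RCLike.real_smul_eq_coe_smul (K := ℂ)
        (x := X x), map_smul]
    rw [hXapp, RCLike.real_smul_eq_coe_smul (K := ℂ), RCLike.real_smul_eq_coe_smul (K := ℂ)
      (x := x), inner_smul_left, inner_smul_right, RCLike.conj_ofReal, ← mul_assoc,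
      ← RCLike.ofReal_mul, RCLike.re_ofReal_mul] at hkey
    have hpos : (0:ℝ) < ‖x‖⁻¹ * ‖x‖⁻¹ := by positivity
    nlinarith [hkey]

lemma aux_re_inner_smul {F : Type*} [NormedAddCommGroup F] [InnerProductSpace ℂ F]
    (r : ℝ) (v w : F) : RCLike.re ⟪(r • v : F), w⟫_ℂ = r * RCLike.re ⟪v, w⟫_ℂ := by
  rw [RCLike.real_smul_eq_coe_smul (K := ℂ), inner_smul_left, RCLike.conj_ofReal,
    RCLike.re_ofReal_mul]

end Aux

set_option maxHeartbeats 2000000 in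
set_option synthInstance.maxHeartbeats 200000 in
/-- Reverse of the parallel-sum inequality `Φ(A : B) ≤ Φ(A) : Φ(B)`. -/
theorem reverse_parallel_sum {H K : Type*}
    [NormedAddCommGroup H] [InnerProductSpace ℂ H] [CompleteSpace H]
    [NormedAddCommGroup K] [InnerProductSpace ℂ K] [CompleteSpace K]
    (A B : H →L[ℂ] H) (hA : A.IsPositive) (hAinv : IsUnit A)
    (hB : B.IsPositive) (hBinv : IsUnit B)
    (Φ : (H →L[ℂ] H) →ₗ[ℂ] (K →L[ℂ] K))
    (hΦpos : ∀ T : H →L[ℂ] H, T.IsPositive → (Φ T).IsPositive)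
    (hΦ1 : Φ 1 = 1)
    (δ : ℝ)
    (hδ : δ = ⨆ x : {x : K // ‖x‖ = 1},
      (RCLike.re ⟪(cfc (fun t : ℝ => t ^ (-(1/2) : ℝ)) (Φ (A + B))
          * Φ (A * Ring.inverse (A + B) * A)
          * cfc (fun t : ℝ => t ^ (-(1/2) : ℝ)) (Φ (A + B))) (x : K), (x : K)⟫_ℂ
        - (RCLike.re ⟪(cfc (fun t : ℝ => t ^ (-(1/2) : ℝ)) (Φ (A + B)) * Φ A
            * cfc (fun t : ℝ => t ^ (-(1/2) : ℝ)) (Φ (A + B))) (x : K), (x : K)⟫_ℂ) ^ 2)) :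
    Ring.inverse (Ring.inverse (Φ A) + Ring.inverse (Φ B)) ≤
      Φ (Ring.inverse (Ring.inverse A + Ring.inverse B)) + (2 * δ) • Φ (A + B) := by
  by_cases htriv : Subsingleton (K →L[ℂ] K)
  · exact le_of_eq (Subsingleton.elim _ _)
  have hKnt : Nontrivial (K →L[ℂ] K) := not_subsingleton_iff_nontrivial.mp htriv
  have hHnt : Nontrivial (H →L[ℂ] H) := by
    by_contra hcon
    have hsub : Subsingleton (H →L[ℂ] H) := not_nontrivial_iff_subsingleton.mp hcon
    have h10 : (1 : H →L[ℂ] H) = 0 := Subsingleton.elim _ _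
    have h10' : (1 : K →L[ℂ] K) = 0 := by rw [← hΦ1, h10, map_zero]
    exact one_ne_zero h10'
  have ha : 0 ≤ A := (ContinuousLinearMap.nonneg_iff_isPositive A).mpr hA
  have hb : 0 ≤ B := (ContinuousLinearMap.nonneg_iff_isPositive B).mpr hB
  have hT : 0 ≤ A + B := add_nonneg ha hb
  have hTu : IsUnit (A + B) := CStarAlgebra.isUnit_of_le A (le_add_of_nonneg_right hb)
    (IsStrictlyPositive.iff_of_unital.mpr ⟨ha, hAinv⟩)
  have hΦ0 : ∀ X : H →L[ℂ] H, 0 ≤ X → 0 ≤ Φ X := fun X hX =>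
    (ContinuousLinearMap.nonneg_iff_isPositive _).mpr
      (hΦpos X ((ContinuousLinearMap.nonneg_iff_isPositive X).mp hX))
  have hΦsmulR : ∀ (r : ℝ) (X : H →L[ℂ] H), Φ (r • X) = r • Φ X := fun r X => by
    rw [← algebraMap_smul ℂ r X, map_smul, algebraMap_smul]
  have hΦunit : ∀ X : H →L[ℂ] H, 0 ≤ X → IsUnit X → IsUnit (Φ X) := by
    intro X hX hXu
    obtain ⟨ε, hε, hεX⟩ := (CFC.exists_pos_algebraMap_le_iff (a := X)
      (IsSelfAdjoint.of_nonneg hX)).mpr (aux_spec_pos hX hXu)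
    have hmap : Φ (algebraMap ℝ (H →L[ℂ] H) ε) = algebraMap ℝ (K →L[ℂ] K) ε := by
      rw [Algebra.algebraMap_eq_smul_one, Algebra.algebraMap_eq_smul_one, hΦsmulR, hΦ1]
    have hεΦX : algebraMap ℝ (K →L[ℂ] K) ε ≤ Φ X := by
      have h := hΦ0 _ (sub_nonneg.mpr hεX)
      rw [map_sub, hmap] at h
      exact sub_nonneg.mp h
    have hεu : IsUnit (algebraMap ℝ (K →L[ℂ] K) ε) :=
      (isUnit_iff_ne_zero.mpr hε.ne').map (algebraMap ℝ (K →L[ℂ] K))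
    have hεnn : 0 ≤ algebraMap ℝ (K →L[ℂ] K) ε := by
      rw [Algebra.algebraMap_eq_smul_one]
      have h2 := star_mul_self_nonneg ((Real.sqrt ε) • (1 : K →L[ℂ] K))
      rw [star_smul, star_one, star_trivial, smul_mul_smul_comm, one_mul,
        Real.mul_self_sqrt hε.le] at h2
      exact h2
    exact CStarAlgebra.isUnit_of_le _ hεΦX (IsStrictlyPositive.iff_of_unital.mpr ⟨hεnn, hεu⟩)
  have hΦAu := hΦunit A ha hAinv
  have hΦBu := hΦunit B hb hBinv
  set s : K →L[ℂ] K := Φ (A + B) with hs_def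
  have hs : 0 ≤ s := hΦ0 _ hT
  have hsu : IsUnit s := hΦunit _ hT hTu
  set m : K →L[ℂ] K := cfc (fun t : ℝ => t ^ (-(1/2) : ℝ)) s with hm_def
  set n : K →L[ℂ] K := cfc (fun t : ℝ => t ^ ((1/2) : ℝ)) s with hn_def
  have hspos := aux_spec_pos hs hsu
  have hm_nn : 0 ≤ m := cfc_nonneg fun t ht => Real.rpow_nonneg (hspos t ht).le _
  have hn_nn : 0 ≤ n := cfc_nonneg fun t ht => Real.rpow_nonneg (hspos t ht).le _
  have hm_sa : star m = m := (IsSelfAdjoint.of_nonneg hm_nn).star_eq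
  have hn_sa : star n = n := (IsSelfAdjoint.of_nonneg hn_nn).star_eq
  have hmm : m * m = Ring.inverse s := by
    rw [hm_def, aux_rpow_mul hs hsu, show (-(1/2) + -(1/2) : ℝ) = -1 by norm_num,
      aux_rpow_neg_one hs hsu]
  have hmn : m * n = 1 := by
    rw [hm_def, hn_def, aux_rpow_mul hs hsu, show (-(1/2) + (1/2) : ℝ) = 0 by norm_num,
      aux_rpow_zero hs]
  have hnm : n * m = 1 := by
    rw [hm_def, hn_def, aux_rpow_mul hs hsu, show ((1/2) + -(1/2) : ℝ) = 0 by norm_num,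
      aux_rpow_zero hs]
  have hnn2 : n * n = s := by
    rw [hn_def, aux_rpow_mul hs hsu, show ((1/2) + (1/2) : ℝ) = 1 by norm_num, aux_rpow_one hs]
  have hmsm : m * s * m = 1 := by
    rw [← hnn2]
    calc m * (n * n) * m = (m * n) * (n * m) := by noncomm_ring
    _ = 1 := by rw [hmn, hnm, one_mul]
  set mt : H →L[ℂ] H := cfc (fun t : ℝ => t ^ (-(1/2) : ℝ)) (A + B) with hmt_def
  set nt : H →L[ℂ] H := cfc (fun t : ℝ => t ^ ((1/2) : ℝ)) (A + B) with hnt_def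
  have hTpos := aux_spec_pos hT hTu
  have hmt_nn : 0 ≤ mt := cfc_nonneg fun t ht => Real.rpow_nonneg (hTpos t ht).le _
  have hnt_nn : 0 ≤ nt := cfc_nonneg fun t ht => Real.rpow_nonneg (hTpos t ht).le _
  have hmt_sa : star mt = mt := (IsSelfAdjoint.of_nonneg hmt_nn).star_eq
  have hnt_sa : star nt = nt := (IsSelfAdjoint.of_nonneg hnt_nn).star_eq
  have hmtmt : mt * mt = Ring.inverse (A + B) := by
    rw [hmt_def, aux_rpow_mul hT hTu, show (-(1/2) + -(1/2) : ℝ) = -1 by norm_num,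
      aux_rpow_neg_one hT hTu]
  have hmtnt : mt * nt = 1 := by
    rw [hmt_def, hnt_def, aux_rpow_mul hT hTu, show (-(1/2) + (1/2) : ℝ) = 0 by norm_num,
      aux_rpow_zero hT]
  have hntmt : nt * mt = 1 := by
    rw [hmt_def, hnt_def, aux_rpow_mul hT hTu, show ((1/2) + -(1/2) : ℝ) = 0 by norm_num,
      aux_rpow_zero hT]
  have hntnt : nt * nt = A + B := by
    rw [hnt_def, aux_rpow_mul hT hTu, show ((1/2) + (1/2) : ℝ) = 1 by norm_num, aux_rpow_one hT]
  have hA_sa : star A = A := hA.isSelfAdjoint.star_eq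
  have hATA_nn : 0 ≤ A * Ring.inverse (A + B) * A := by
    have h1 : A * Ring.inverse (A + B) * A = star (mt * A) * (mt * A) := by
      rw [star_mul, hmt_sa, hA_sa, ← hmtmt]
      noncomm_ring
    rw [h1]
    exact star_mul_self_nonneg _
  set C : K →L[ℂ] K := m * Φ (A * Ring.inverse (A + B) * A) * m with hC_def
  set D : K →L[ℂ] K := m * Φ A * m with hD_def
  have hC_nn : 0 ≤ C := by
    have h := star_left_conjugate_nonneg (hΦ0 _ hATA_nn) m
    rwa [hm_sa] at h
  have hD_nn : 0 ≤ D := by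
    have h := star_left_conjugate_nonneg (hΦ0 _ ha) m
    rwa [hm_sa] at h
  have hC_sa : IsSelfAdjoint C := IsSelfAdjoint.of_nonneg hC_nn
  have hD_sa : IsSelfAdjoint D := IsSelfAdjoint.of_nonneg hD_nn
  -- pointwise lower bound : Cauchy–Schwarz for the state
  have hlow : ∀ x : K, ‖x‖ = 1 →
      0 ≤ RCLike.re ⟪C x, x⟫_ℂ - (RCLike.re ⟪D x, x⟫_ℂ) ^ 2 := by
    intro x hx
    set c : ℝ := RCLike.re ⟪D x, x⟫_ℂ with hc_def
    have hw0 : star (mt * A - c • nt) * (mt * A - c • nt)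
        = A * Ring.inverse (A + B) * A - (2 * c) • A + (c ^ 2) • (A + B) := by
      rw [star_sub, star_mul, star_smul, hmt_sa, hnt_sa, hA_sa, star_trivial]
      have e1 : (A * mt - c • nt) * (mt * A - c • nt)
          = A * mt * (mt * A) - A * mt * (c • nt) - (c • nt) * (mt * A)
            + (c • nt) * (c • nt) := by
        rw [sub_mul, mul_sub, mul_sub]
        abel
      have e2 : A * mt * (mt * A) = A * Ring.inverse (A + B) * A := by
        rw [← hmtmt]; noncomm_ring
      have e3 : A * mt * (c • nt) = c • A := by
        rw [mul_smul_comm, mul_assoc, hmtnt, mul_one]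
      have e4 : (c • nt) * (mt * A) = c • A := by
        rw [smul_mul_assoc, ← mul_assoc, hntmt, one_mul]
      have e5 : (c • nt) * (c • nt) = (c ^ 2) • (A + B) := by
        rw [smul_mul_assoc, mul_smul_comm, smul_smul, ← sq, hntnt]
      rw [e1, e2, e3, e4, e5]
      module
    have hP_nn : 0 ≤ A * Ring.inverse (A + B) * A - (2 * c) • A + (c ^ 2) • (A + B) := by
      rw [← hw0]; exact star_mul_self_nonneg _
    have hΦP := hΦ0 _ hP_nn
    rw [map_add, map_sub, hΦsmulR, hΦsmulR, ← hs_def] at hΦP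
    have hconj := star_left_conjugate_nonneg hΦP m
    rw [hm_sa] at hconj
    have hexp : m * (Φ (A * Ring.inverse (A + B) * A) - (2 * c) • Φ A + (c ^ 2) • s) * m
        = C - (2 * c) • D + (c ^ 2) • 1 := by
      rw [hC_def, hD_def, ← hmsm]
      simp only [mul_sub, sub_mul, mul_add, add_mul, mul_smul_comm, smul_mul_assoc]
    rw [hexp] at hconj
    have hq := ((ContinuousLinearMap.nonneg_iff_isPositive _).mp hconj).re_inner_nonneg_left x
    simp only [ContinuousLinearMap.add_apply, ContinuousLinearMap.sub_apply,
      ContinuousLinearMap.smul_apply, ContinuousLinearMap.one_apply, inner_add_left,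
      inner_sub_left, map_add, map_sub, aux_re_inner_smul] at hq
    have hxx : RCLike.re ⟪x, x⟫_ℂ = 1 := by
      rw [inner_self_eq_norm_sq, hx]; norm_num
    rw [hxx, ← hc_def] at hq
    nlinarith [hq]
  have hδ0 : 0 ≤ δ := by
    rw [hδ]
    exact Real.iSup_nonneg fun x => hlow x x.2
  have hbdd : BddAbove (Set.range fun x : {x : K // ‖x‖ = 1} =>
      RCLike.re ⟪C (x : K), (x : K)⟫_ℂ - (RCLike.re ⟪D (x : K), (x : K)⟫_ℂ) ^ 2) := by
    refine ⟨‖C‖, ?_⟩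
    rintro r ⟨x, rfl⟩
    have h1 : RCLike.re ⟪C (x : K), (x : K)⟫_ℂ ≤ ‖C‖ := by
      calc RCLike.re ⟪C (x : K), (x : K)⟫_ℂ ≤ |RCLike.re ⟪C (x : K), (x : K)⟫_ℂ| :=
        le_abs_self _
      _ ≤ ‖(⟪C (x : K), (x : K)⟫_ℂ : ℂ)‖ := RCLike.abs_re_le_norm _
      _ ≤ ‖C (x : K)‖ * ‖(x : K)‖ := norm_inner_le_norm _ _
      _ ≤ (‖C‖ * ‖(x : K)‖) * ‖(x : K)‖ :=
        mul_le_mul_of_nonneg_right (C.le_opNorm _) (norm_nonneg _)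
      _ = ‖C‖ := by rw [x.2]; ring
    have h2 := sq_nonneg (RCLike.re ⟪D (x : K), (x : K)⟫_ℂ)
    simp only
    linarith
  have hkey : C - D * D ≤ (2 * δ) • 1 := by
    rw [← sub_nonneg]
    apply aux_op_le
    · have hDD : IsSelfAdjoint (D * D) := by
        rw [IsSelfAdjoint, star_mul, hD_sa.star_eq]
      exact (IsSelfAdjoint.smul (star_trivial (2 * δ)) (IsSelfAdjoint.one _)).sub
        (hC_sa.sub hDD)
    · intro u hu
      simp only [ContinuousLinearMap.sub_apply, ContinuousLinearMap.smul_apply,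
        ContinuousLinearMap.one_apply, inner_sub_left, map_sub, aux_re_inner_smul]
      have hDDu : RCLike.re ⟪(D * D) u, u⟫_ℂ = ‖D u‖ ^ 2 := by
        have hsym := ContinuousLinearMap.isSelfAdjoint_iff_isSymmetric.mp hD_sa
        rw [ContinuousLinearMap.mul_apply,
          show ⟪D (D u), u⟫_ℂ = ⟪D u, D u⟫_ℂ from hsym (D u) u, inner_self_eq_norm_sq]
      have hcs : (RCLike.re ⟪D u, u⟫_ℂ) ^ 2 ≤ ‖D u‖ ^ 2 := by
        have h1 : |RCLike.re ⟪D u, u⟫_ℂ| ≤ ‖D u‖ := by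
          calc |RCLike.re ⟪D u, u⟫_ℂ| ≤ ‖(⟪D u, u⟫_ℂ : ℂ)‖ := RCLike.abs_re_le_norm _
          _ ≤ ‖D u‖ * ‖u‖ := norm_inner_le_norm _ _
          _ = ‖D u‖ := by rw [hu, mul_one]
        calc (RCLike.re ⟪D u, u⟫_ℂ) ^ 2 = |RCLike.re ⟪D u, u⟫_ℂ| ^ 2 := (sq_abs _).symm
        _ ≤ ‖D u‖ ^ 2 := by nlinarith [abs_nonneg (RCLike.re ⟪D u, u⟫_ℂ)]
      have hsup : RCLike.re ⟪C u, u⟫_ℂ - (RCLike.re ⟪D u, u⟫_ℂ) ^ 2 ≤ δ := by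
        rw [hδ]
        exact le_ciSup hbdd ⟨u, hu⟩
      have hxx : RCLike.re ⟪u, u⟫_ℂ = 1 := by
        rw [inner_self_eq_norm_sq, hu]; norm_num
      rw [hxx, hDDu]
      linarith
  have hkey2 : Φ (A * Ring.inverse (A + B) * A) - Φ A * Ring.inverse s * Φ A
      ≤ (2 * δ) • s := by
    have h := star_left_conjugate_le_conjugate hkey n
    rw [hn_sa] at h
    have e1 : n * (C - D * D) * n
        = Φ (A * Ring.inverse (A + B) * A) - Φ A * Ring.inverse s * Φ A := by
      rw [hC_def, hD_def, ← hmm, mul_sub, sub_mul]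
      have g1 : n * (m * Φ (A * Ring.inverse (A + B) * A) * m) * n
          = (n * m) * Φ (A * Ring.inverse (A + B) * A) * (m * n) := by noncomm_ring
      have g2 : n * ((m * Φ A * m) * (m * Φ A * m)) * n
          = (n * m) * (Φ A * (m * m) * Φ A) * (m * n) := by noncomm_ring
      rw [g1, g2, hnm, hmn, one_mul, one_mul, mul_one, mul_one]
    have e2 : n * ((2 * δ) • (1 : K →L[ℂ] K)) * n = (2 * δ) • s := by
      rw [mul_smul_comm, smul_mul_assoc, mul_one, hnn2]
    rw [e1, e2] at h
    exact h
  have hLHS : Ring.inverse (Ring.inverse (Φ A) + Ring.inverse (Φ B))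
      = Φ A - Φ A * Ring.inverse s * Φ A := by
    have hsum : Φ A + Φ B = s := by rw [hs_def, map_add]
    have h := aux_parallel hΦAu hΦBu (by rw [hsum]; exact hsu)
    rwa [hsum] at h
  have hRHS : Φ (Ring.inverse (Ring.inverse A + Ring.inverse B))
      = Φ A - Φ (A * Ring.inverse (A + B) * A) := by
    rw [aux_parallel hAinv hBinv hTu, map_sub]
  rw [hLHS, hRHS]
  have hsplit : Φ A - Φ A * Ring.inverse s * Φ A
      = (Φ A - Φ (A * Ring.inverse (A + B) * A))
        + (Φ (A * Ring.inverse (A + B) * A) - Φ A * Ring.inverse s * Φ A) := by abel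
  rw [hsplit]
  exact add_le_add_right hkey2 _
end

section
/- Let A₁,…,Aₙ be self-adjoint operators with spectra in an interval J, Φ₁,…,Φₙ : B(H) → B(K) positive linear maps with ∑ᵢ Φᵢ(1_H) = 1_K, and f : J → ℝ convex differentiable. Then for every unit vector x ∈ K: ⟨∑ᵢ Φᵢ(f(Aᵢ)) x, x⟩ ≤ f(⟨∑ᵢ Φᵢ(Aᵢ) x, x⟩) + ⟨∑ᵢ Φᵢ(f'(Aᵢ)Aᵢ) x, x⟩ − ⟨∑ᵢ Φᵢ(Aᵢ) x, x⟩·⟨∑ᵢ Φᵢ(f'(Aᵢ)) x, x⟩. -/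
open scoped InnerProductSpace

private lemma tangent_le' {f f' : ℝ → ℝ} {J : Set ℝ} (hf : ConvexOn ℝ J f)
    (hf' : ∀ t ∈ J, HasDerivAt f (f' t) t) {t μ : ℝ} (ht : t ∈ J) (hμ : μ ∈ J) :
    f t ≤ f μ + (f' t * t - μ * f' t) := by
  rcases lt_trichotomy t μ with h | rfl | h
  · have h1 := hf.le_slope_of_hasDerivAt ht hμ h (hf' t ht)
    rw [slope_def_field] at h1
    have h2 : 0 < μ - t := by linarith
    have := (le_div_iff₀ h2).mp h1
    nlinarith
  · nlinarith [le_refl (f t)]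
  · have h1 := hf.slope_le_of_hasDerivAt hμ ht h (hf' t ht)
    rw [slope_def_field] at h1
    have h2 : 0 < t - μ := by linarith
    have := (div_le_iff₀ h2).mp h1
    nlinarith

set_option maxHeartbeats 2000000 in
set_option synthInstance.maxHeartbeats 400000 in
/-- Pointwise reverse of the vector Jensen inequality. -/
theorem pointwise_reverse_vector_jensen {H K : Type*}
    [NormedAddCommGroup H] [InnerProductSpace ℂ H] [CompleteSpace H]
    [NormedAddCommGroup K] [InnerProductSpace ℂ K] [CompleteSpace K]
    (f f' : ℝ → ℝ) (J : Set ℝ) (hf : ConvexOn ℝ J f)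
    (hf' : ∀ t ∈ J, HasDerivAt f (f' t) t) (hf'c : ContinuousOn f' J)
    (n : ℕ) (A : Fin n → H →L[ℂ] H)
    (Φ : Fin n → (H →L[ℂ] H) →ₗ[ℂ] (K →L[ℂ] K))
    (hA : ∀ i, IsSelfAdjoint (A i)) (hspec : ∀ i, spectrum ℝ (A i) ⊆ J)
    (hΦpos : ∀ i, ∀ T : H →L[ℂ] H, T.IsPositive → (Φ i T).IsPositive)
    (hunital : ∑ i, Φ i 1 = 1)
    (x : K) (hx : ‖x‖ = 1) :
    RCLike.re ⟪(∑ i, Φ i (cfc f (A i))) x, x⟫_ℂ ≤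
      f (RCLike.re ⟪(∑ i, Φ i (A i)) x, x⟫_ℂ)
        + RCLike.re ⟪(∑ i, Φ i (cfc f' (A i) * A i)) x, x⟫_ℂ
        - RCLike.re ⟪(∑ i, Φ i (A i)) x, x⟫_ℂ
          * RCLike.re ⟪(∑ i, Φ i (cfc f' (A i))) x, x⟫_ℂ := by
  classical
  have hx0 : x ≠ 0 := fun h => by simp [h] at hx
  haveI hKnt : Nontrivial K := ⟨⟨x, 0, hx0⟩⟩
  have hone : (1 : K →L[ℂ] K) ≠ 0 := by
    intro h
    have h2 := congrArg (fun T : K →L[ℂ] K => T x) h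
    simp only [ContinuousLinearMap.one_apply, ContinuousLinearMap.zero_apply] at h2
    exact hx0 h2
  haveI hHnt : Nontrivial H := by
    by_contra hcon
    rw [not_nontrivial_iff_subsingleton] at hcon
    have h10 : (1 : H →L[ℂ] H) = 0 := ContinuousLinearMap.ext fun y => Subsingleton.elim _ _
    have : (1 : K →L[ℂ] K) = 0 := by rw [← hunital]; simp [h10]
    exact hone this
  haveI : Nontrivial (H →L[ℂ] H) := by
    obtain ⟨y, hy⟩ := exists_ne (0 : H)
    refine ⟨1, 0, fun h => ?_⟩
    have h2 := congrArg (fun T : H →L[ℂ] H => T y) h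
    simp only [ContinuousLinearMap.one_apply, ContinuousLinearMap.zero_apply] at h2
    exact hy h2
  -- helpers
  have hinner : ∀ {S T : K →L[ℂ] K}, S ≤ T →
      RCLike.re ⟪S x, x⟫_ℂ ≤ RCLike.re ⟪T x, x⟫_ℂ := by
    intro S T h
    have h2 := ((ContinuousLinearMap.le_def S T).mp h).re_inner_nonneg_left x
    simp only [ContinuousLinearMap.sub_apply, inner_sub_left, map_sub] at h2
    linarith
  have hΦmono : ∀ i ⦃S T : H →L[ℂ] H⦄, S ≤ T → Φ i S ≤ Φ i T := by
    intro i S T h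
    rw [ContinuousLinearMap.le_def] at h ⊢
    rw [← map_sub]
    exact hΦpos i _ h
  have hsmulre : ∀ (r : ℝ) (T : K →L[ℂ] K),
      RCLike.re ⟪(r • T) x, x⟫_ℂ = r * RCLike.re ⟪T x, x⟫_ℂ := by
    intro r T
    rw [ContinuousLinearMap.smul_apply, RCLike.real_smul_eq_coe_smul (K := ℂ),
      inner_smul_left, RCLike.conj_ofReal, RCLike.re_ofReal_mul]
  have hfc : ContinuousOn f J := fun t ht => ((hf' t ht).continuousAt).continuousWithinAt
  have hf'σ : ∀ i, ContinuousOn f' (spectrum ℝ (A i)) := fun i => hf'c.mono (hspec i)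
  have honex : RCLike.re ⟪(1 : K →L[ℂ] K) x, x⟫_ℂ = 1 := by
    simp [inner_self_eq_norm_sq, hx]
  -- spectrum data
  have hcpt : ∀ i, IsCompact (spectrum ℝ (A i)) := fun i => spectrum.isCompact _
  have hne : ∀ i, (spectrum ℝ (A i)).Nonempty := fun i => (hA i).spectrum_nonempty
  set a := fun i => sInf (spectrum ℝ (A i)) with ha_def
  set b := fun i => sSup (spectrum ℝ (A i)) with hb_def
  have haJ : ∀ i, a i ∈ J := fun i => hspec i ((hcpt i).sInf_mem (hne i))
  have hbJ : ∀ i, b i ∈ J := fun i => hspec i ((hcpt i).sSup_mem (hne i))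
  have hAlb : ∀ i, algebraMap ℝ _ (a i) ≤ A i := by
    intro i
    have h := cfc_mono (f := fun _ => a i) (g := (id : ℝ → ℝ)) (a := A i)
      (fun t ht => csInf_le (hcpt i).bddBelow ht)
    rwa [cfc_const (a i) (A i) (hA i), cfc_id ℝ (A i) (hA i)] at h
  have hAub : ∀ i, A i ≤ algebraMap ℝ _ (b i) := by
    intro i
    have h := cfc_mono (f := (id : ℝ → ℝ)) (g := fun _ => b i) (a := A i)
      (fun t ht => le_csSup (hcpt i).bddAbove ht)
    rwa [cfc_const (b i) (A i) (hA i), cfc_id ℝ (A i) (hA i)] at h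
  -- weights
  set w := fun i => RCLike.re ⟪(Φ i 1) x, x⟫_ℂ with hw_def
  set m := fun i => RCLike.re ⟪(Φ i (A i)) x, x⟫_ℂ with hm_def
  have hw0 : ∀ i, 0 ≤ w i := fun i =>
    (hΦpos i 1 ContinuousLinearMap.isPositive_one).re_inner_nonneg_left x
  have halg : ∀ (r : ℝ) (i), Φ i (algebraMap ℝ _ r) = r • Φ i 1 := fun r i => by
    rw [Algebra.algebraMap_eq_smul_one, LinearMap.map_smul_of_tower]
  have hml : ∀ i, a i * w i ≤ m i := by
    intro i
    have h := hinner (hΦmono i (hAlb i))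
    rwa [halg, hsmulre] at h
  have hmu : ∀ i, m i ≤ b i * w i := by
    intro i
    have h := hinner (hΦmono i (hAub i))
    rwa [halg, hsmulre] at h
  have hsumw : ∑ i, w i = 1 := by
    have h : ∑ i, w i = RCLike.re ⟪(∑ i, Φ i 1) x, x⟫_ℂ := by
      simp [hw_def, ContinuousLinearMap.sum_apply, sum_inner]
    rw [h, hunital, honex]
  have hμm : RCLike.re ⟪(∑ i, Φ i (A i)) x, x⟫_ℂ = ∑ i, m i := by
    simp [hm_def, ContinuousLinearMap.sum_apply, sum_inner]
  set μ := RCLike.re ⟪(∑ i, Φ i (A i)) x, x⟫_ℂ with hμ_def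
  -- μ ∈ J
  set s := fun i => if w i = 0 then a i else m i / w i with hs_def
  have hsJ : ∀ i, s i ∈ J := by
    intro i
    by_cases h : w i = 0
    · simpa [hs_def, h] using haJ i
    · have hwpos : 0 < w i := lt_of_le_of_ne (hw0 i) (Ne.symm h)
      have h1 : a i ≤ m i / w i := (le_div_iff₀ hwpos).mpr (hml i)
      have h2 : m i / w i ≤ b i := (div_le_iff₀ hwpos).mpr (hmu i)
      have h3 := hf.1.ordConnected.out (haJ i) (hbJ i) ⟨h1, h2⟩
      simpa [hs_def, h] using h3
  have hws : ∀ i, w i • s i = m i := by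
    intro i
    by_cases h : w i = 0
    · have h1 := hml i; have h2 := hmu i
      rw [h] at h1 h2
      simp only [mul_zero] at h1 h2
      rw [h, zero_smul]
      linarith
    · rw [hs_def]
      simp only [h, if_false, smul_eq_mul]
      field_simp
  have hμJ : μ ∈ J := by
    have h : ∑ i, w i • s i = μ := by
      rw [hμm]; exact Finset.sum_congr rfl fun i _ => hws i
    rw [← h]
    exact hf.1.sum_mem (fun i _ => hw0 i) hsumw (fun i _ => hsJ i)
  -- per-index operator inequality
  have hgeq : ∀ i, cfc (fun t => f μ + (f' t * t - μ * f' t)) (A i)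
      = algebraMap ℝ _ (f μ) + (cfc f' (A i) * A i - μ • cfc f' (A i)) := by
    intro i
    have hid : ContinuousOn (id : ℝ → ℝ) (spectrum ℝ (A i)) := continuousOn_id
    have e1 : cfc (fun t : ℝ => f' t * t) (A i) = cfc f' (A i) * A i := by
      have h := cfc_mul f' id (A i) (hf'σ i) hid
      rwa [cfc_id ℝ (A i) (hA i)] at h
    have e2 : cfc (fun t : ℝ => μ * f' t) (A i) = μ • cfc f' (A i) :=
      cfc_const_mul μ f' (A i) (hf'σ i)
    have e3 : cfc (fun _ : ℝ => f μ) (A i) = algebraMap ℝ _ (f μ) :=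
      cfc_const (f μ) (A i) (hA i)
    rw [← e1, ← e2, ← e3,
      ← cfc_sub (fun t : ℝ => f' t * t) (fun t : ℝ => μ * f' t) (A i)
        ((hf'σ i).mul hid) (continuousOn_const.mul (hf'σ i)),
      ← cfc_add (A i) (fun _ : ℝ => f μ) (fun t : ℝ => f' t * t - μ * f' t)
        continuousOn_const (((hf'σ i).mul hid).sub (continuousOn_const.mul (hf'σ i)))]
  have hkey : ∀ i, Φ i (cfc f (A i)) ≤
      f μ • Φ i 1 + (Φ i (cfc f' (A i) * A i) - μ • Φ i (cfc f' (A i))) := by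
    intro i
    have hid : ContinuousOn (id : ℝ → ℝ) (spectrum ℝ (A i)) := continuousOn_id
    have hle : cfc f (A i) ≤ cfc (fun t => f μ + (f' t * t - μ * f' t)) (A i) :=
      cfc_mono (fun t ht => tangent_le' hf hf' (hspec i ht) hμJ)
        (hfc.mono (hspec i))
        (continuousOn_const.add (((hf'σ i).mul hid).sub (continuousOn_const.mul (hf'σ i))))
    have h := hΦmono i hle
    rwa [hgeq i, map_add, map_sub, halg, LinearMap.map_smul_of_tower] at h
  have hsum := Finset.sum_le_sum (fun i (_ : i ∈ Finset.univ) => hkey i)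
  rw [Finset.sum_add_distrib, Finset.sum_sub_distrib, ← Finset.smul_sum, ← Finset.smul_sum,
    hunital] at hsum
  have hfin := hinner hsum
  rw [ContinuousLinearMap.add_apply, inner_add_left, map_add,
    ContinuousLinearMap.sub_apply, inner_sub_left, map_sub] at hfin
  have e4 : RCLike.re ⟪(f μ • (1 : K →L[ℂ] K)) x, x⟫_ℂ = f μ := by
    rw [hsmulre, honex, mul_one]
  have e5 : RCLike.re ⟪(μ • ∑ i, Φ i (cfc f' (A i))) x, x⟫_ℂ
      = μ * RCLike.re ⟪(∑ i, Φ i (cfc f' (A i))) x, x⟫_ℂ := hsmulre _ _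
  rw [e4, e5] at hfin
  linarith
end

section
/- Let A₁,…,Aₙ be self-adjoint operators with spectra in an interval J, Φ₁,…,Φₙ : B(H) → B(K) positive linear maps with ∑ᵢ Φᵢ(1_H) = 1_K, f : J → ℝ convex differentiable, and S = ∑ᵢ Φᵢ(Aᵢ). Then for every unit vector x ∈ K: ⟨f(S) x, x⟩ ≤ f(⟨S x, x⟩) + ⟨f'(S)·S x, x⟩ − ⟨S x, x⟩·⟨f'(S) x, x⟩. -/
open scoped InnerProductSpace

private lemma tangent_line_le {f f' : ℝ → ℝ} {J : Set ℝ} (hf : ConvexOn ℝ J f)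
    (hf' : ∀ t ∈ J, HasDerivAt f (f' t) t) {t c : ℝ} (ht : t ∈ J) (hc : c ∈ J) :
    f t + f' t * (c - t) ≤ f c := by
  rcases lt_trichotomy t c with h | rfl | h
  · have h1 := hf.le_slope_of_hasDerivAt ht hc h (hf' t ht)
    rw [slope_def_field] at h1
    have h2 := (le_div_iff₀ (sub_pos.mpr h)).mp h1
    linarith
  · simp
  · have h1 := hf.slope_le_of_hasDerivAt hc ht h (hf' t ht)
    rw [slope_def_field] at h1
    have h2 := (div_le_iff₀ (sub_pos.mpr h)).mp h1
    have h3 : f' t * (c - t) = -(f' t * (t - c)) := by ring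
    linarith

set_option maxHeartbeats 2000000 in
set_option synthInstance.maxHeartbeats 400000 in
/-- Pointwise converse of `f(⟨Sx,x⟩) ≤ ⟨f(S)x,x⟩`. -/
theorem pointwise_converse_vector_jensen {H K : Type*}
    [NormedAddCommGroup H] [InnerProductSpace ℂ H] [CompleteSpace H]
    [NormedAddCommGroup K] [InnerProductSpace ℂ K] [CompleteSpace K]
    (f f' : ℝ → ℝ) (J : Set ℝ) (hf : ConvexOn ℝ J f)
    (hf' : ∀ t ∈ J, HasDerivAt f (f' t) t) (hf'c : ContinuousOn f' J)
    (n : ℕ) (A : Fin n → H →L[ℂ] H)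
    (Φ : Fin n → (H →L[ℂ] H) →ₗ[ℂ] (K →L[ℂ] K))
    (hA : ∀ i, IsSelfAdjoint (A i)) (hspec : ∀ i, spectrum ℝ (A i) ⊆ J)
    (hΦpos : ∀ i, ∀ T : H →L[ℂ] H, T.IsPositive → (Φ i T).IsPositive)
    (hunital : ∑ i, Φ i 1 = 1)
    (S : K →L[ℂ] K) (hS : S = ∑ i, Φ i (A i))
    (x : K) (hx : ‖x‖ = 1) :
    RCLike.re ⟪cfc f S x, x⟫_ℂ ≤
      f (RCLike.re ⟪S x, x⟫_ℂ)
        + RCLike.re ⟪(cfc f' S * S) x, x⟫_ℂ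
        - RCLike.re ⟪S x, x⟫_ℂ * RCLike.re ⟪cfc f' S x, x⟫_ℂ := by
  -- the identity on `K` is nonzero, since `x` is a unit vector
  have hK1 : (1 : K →L[ℂ] K) ≠ 0 := by
    intro h
    have hx0 : x = 0 := by simpa using congrArg (fun T : K →L[ℂ] K => T x) h
    rw [hx0, norm_zero] at hx
    exact zero_ne_one (α := ℝ) hx
  -- `n ≠ 0`
  have hn : n ≠ 0 := by
    rintro rfl
    exact hK1 (by simpa using hunital.symm)
  haveI : Nonempty (Fin n) := ⟨⟨0, Nat.pos_of_ne_zero hn⟩⟩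
  -- `H →L[ℂ] H` is nontrivial
  haveI hH1 : Nontrivial (H →L[ℂ] H) := by
    rcases subsingleton_or_nontrivial (H →L[ℂ] H) with hsub | h
    · exfalso
      apply hK1
      rw [← hunital]
      have h10 : (1 : H →L[ℂ] H) = 0 := Subsingleton.elim _ _
      simp [h10]
    · exact h
  have hspec_ne : ∀ i, (spectrum ℝ (A i)).Nonempty := fun i => (hA i).spectrum_nonempty
  have hcpt : ∀ i, IsCompact (spectrum ℝ (A i)) := fun i => spectrum.isCompact _
  set m : ℝ := Finset.univ.inf' Finset.univ_nonempty (fun i => sInf (spectrum ℝ (A i))) with hm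
  set M : ℝ := Finset.univ.sup' Finset.univ_nonempty (fun i => sSup (spectrum ℝ (A i))) with hM
  have hmJ : m ∈ J := by
    obtain ⟨i, -, hi⟩ := Finset.exists_mem_eq_inf' Finset.univ_nonempty
      (fun i => sInf (spectrum ℝ (A i)))
    rw [hm, hi]
    exact hspec i ((hcpt i).sInf_mem (hspec_ne i))
  have hMJ : M ∈ J := by
    obtain ⟨i, -, hi⟩ := Finset.exists_mem_eq_sup' Finset.univ_nonempty
      (fun i => sSup (spectrum ℝ (A i)))
    rw [hM, hi]
    exact hspec i ((hcpt i).sSup_mem (hspec_ne i))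
  -- operator bounds on each `A i`
  have hbound_lo : ∀ i, algebraMap ℝ (H →L[ℂ] H) m ≤ A i := fun i =>
    (algebraMap_le_iff_le_spectrum (hA i)).mpr fun t ht =>
      le_trans (Finset.inf'_le (fun i => sInf (spectrum ℝ (A i))) (Finset.mem_univ i)) (csInf_le (hcpt i).bddBelow ht)
  have hbound_hi : ∀ i, A i ≤ algebraMap ℝ (H →L[ℂ] H) M := fun i =>
    (le_algebraMap_iff_spectrum_le (hA i)).mpr fun t ht =>
      le_trans (le_csSup (hcpt i).bddAbove ht) (Finset.le_sup' (fun i => sSup (spectrum ℝ (A i))) (Finset.mem_univ i))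
  -- sums of positives through `Φ` are positive
  have key : ∀ B : Fin n → H →L[ℂ] H, (∀ i, (B i).IsPositive) →
      (∑ i, Φ i (B i)).IsPositive := fun B hB =>
    Finset.sum_induction _ _ (fun _ _ h1 h2 => h1.add h2)
      ContinuousLinearMap.isPositive_zero (fun i _ => hΦpos i _ (hB i))
  -- algebraMap computation through Φ
  have halg : ∀ r : ℝ, ∑ i, Φ i (algebraMap ℝ (H →L[ℂ] H) r) = algebraMap ℝ (K →L[ℂ] K) r := by
    intro r
    simp only [Algebra.algebraMap_eq_smul_one]
    rw [Finset.sum_congr rfl fun i _ => (Φ i).map_smul_of_tower r 1, ← Finset.smul_sum, hunital]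
  have hS_lb : algebraMap ℝ (K →L[ℂ] K) m ≤ S := by
    rw [ContinuousLinearMap.le_def]
    have : S - algebraMap ℝ (K →L[ℂ] K) m = ∑ i, Φ i (A i - algebraMap ℝ (H →L[ℂ] H) m) := by
      simp only [map_sub, Finset.sum_sub_distrib, halg, hS]
    rw [this]
    refine key _ fun i => ?_
    rw [← ContinuousLinearMap.nonneg_iff_isPositive, sub_nonneg]
    exact hbound_lo i
  have hS_ub : S ≤ algebraMap ℝ (K →L[ℂ] K) M := by
    rw [ContinuousLinearMap.le_def]
    have : algebraMap ℝ (K →L[ℂ] K) M - S = ∑ i, Φ i (algebraMap ℝ (H →L[ℂ] H) M - A i) := by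
      simp only [map_sub, Finset.sum_sub_distrib, halg, hS]
    rw [this]
    refine key _ fun i => ?_
    rw [← ContinuousLinearMap.nonneg_iff_isPositive, sub_nonneg]
    exact hbound_hi i
  -- `S` is self-adjoint
  have hSsa : IsSelfAdjoint S := by
    have h1 : IsSelfAdjoint (S - algebraMap ℝ (K →L[ℂ] K) m) :=
      ((ContinuousLinearMap.le_def _ _).mp hS_lb).isSelfAdjoint
    have h2 : IsSelfAdjoint (algebraMap ℝ (K →L[ℂ] K) m) :=
      (IsSelfAdjoint.all m).algebraMap _
    have h3 := h1.add h2
    rwa [sub_add_cancel] at h3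
  -- spectrum of S is in [m, M] ⊆ J
  have hspecS : spectrum ℝ S ⊆ Set.Icc m M := fun μ hμ =>
    ⟨(algebraMap_le_iff_le_spectrum hSsa).mp hS_lb μ hμ,
     (le_algebraMap_iff_spectrum_le hSsa).mp hS_ub μ hμ⟩
  have hspecJ : spectrum ℝ S ⊆ J := hspecS.trans (hf.1.ordConnected.out hmJ hMJ)
  set c : ℝ := RCLike.re ⟪S x, x⟫_ℂ with hc
  -- evaluation of algebraMap operators at x
  have heval : ∀ (r : ℝ) (y : K), RCLike.re ⟪(algebraMap ℝ (K →L[ℂ] K) r) y, y⟫_ℂ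
      = r * ‖y‖ ^ 2 := by
    intro r y
    rw [Algebra.algebraMap_eq_smul_one]
    simp only [ContinuousLinearMap.smul_apply, ContinuousLinearMap.one_apply]
    rw [RCLike.real_smul_eq_coe_smul (K := ℂ), inner_smul_real_left, RCLike.smul_re,
      inner_self_eq_norm_sq]
  -- c ∈ [m, M] ⊆ J
  have hcm : m ≤ c := by
    have := ((ContinuousLinearMap.le_def _ _).mp hS_lb).re_inner_nonneg_left x
    simp only [ContinuousLinearMap.sub_apply, inner_sub_left, map_sub] at this
    rw [heval m x, hx] at this
    simpa [hc] using this
  have hcM : c ≤ M := by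
    have := ((ContinuousLinearMap.le_def _ _).mp hS_ub).re_inner_nonneg_left x
    simp only [ContinuousLinearMap.sub_apply, inner_sub_left, map_sub] at this
    rw [heval M x, hx] at this
    simpa [hc] using this
  have hcJ : c ∈ J := hf.1.ordConnected.out hmJ hMJ ⟨hcm, hcM⟩
  -- continuity
  have hfcont : ContinuousOn f (spectrum ℝ S) := fun t ht =>
    ((hf' t (hspecJ ht)).continuousAt).continuousWithinAt
  have hf'cont : ContinuousOn f' (spectrum ℝ S) := hf'c.mono hspecJ
  have hgcont : ContinuousOn (fun t => f' t * t - c * f' t) (spectrum ℝ S) :=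
    (hf'cont.mul (continuousOn_id' _)).sub (continuousOn_const.mul hf'cont)
  -- key cfc inequality
  have hle : cfc f S ≤ cfc (fun t => f c + (f' t * t - c * f' t)) S := by
    rw [cfc_le_iff f (fun t => f c + (f' t * t - c * f' t)) S hfcont (continuousOn_const.add hgcont) hSsa]
    intro t ht
    have h1 := tangent_line_le hf hf' (hspecJ ht) hcJ
    have h2 : f' t * (c - t) = c * f' t - f' t * t := by ring
    linarith
  have hrw : cfc (fun t => f c + (f' t * t - c * f' t)) S
      = algebraMap ℝ (K →L[ℂ] K) (f c) + (cfc f' S * S - c • cfc f' S) := by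
    rw [cfc_const_add (f c) _ S hgcont hSsa]
    congr 1
    rw [cfc_sub (fun t => f' t * t) (fun t => c * f' t) S
      (hf'cont.mul (continuousOn_id' _)) (continuousOn_const.mul hf'cont),
      cfc_mul f' (fun t => t) S hf'cont (continuousOn_id' _), cfc_id' ℝ S hSsa,
      cfc_const_mul c f' S hf'cont]
  rw [hrw] at hle
  have hpos := ((ContinuousLinearMap.le_def _ _).mp hle).re_inner_nonneg_left x
  simp only [ContinuousLinearMap.sub_apply, ContinuousLinearMap.add_apply,
    inner_sub_left, inner_add_left, map_sub, map_add] at hpos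
  rw [heval (f c) x, hx] at hpos
  have hsmul : RCLike.re ⟪(c • cfc f' S) x, x⟫_ℂ = c * RCLike.re ⟪cfc f' S x, x⟫_ℂ := by
    rw [show ((c • cfc f' S) x : K) = c • (cfc f' S x) from rfl,
      RCLike.real_smul_eq_coe_smul (K := ℂ), inner_smul_real_left, RCLike.smul_re]
  rw [hsmul] at hpos
  linarith
end
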